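/- arXiv:1002.2436 — 5 statements merged into one kernel-verified Lean document; each statement's English description precedes it below -/
import Mathlib

section
/- Let X, E be finite random variables and F a δ-almost two-universal family of hash functions from 𝒳 to {0,1}^ℓ. Then the expected (over uniform f ∈ F) statistical distance of (f(X),E) from (uniform on {0,1}^ℓ) × E is at most (1/2)·√((2^ℓ δ − 1) + 2^{ℓ − H_min(X|E)}). -/
open Finset

private lemma lhl_cs {ι : Type*} (s : Finset ι) (w a : ι → ℝ)
    (hw : ∀ i, 0 ≤ w i) (ha : ∀ i, 0 ≤ a i) :
    ∑ i ∈ s, w i * Real.sqrt (a i) ≤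
      Real.sqrt (∑ i ∈ s, w i) * Real.sqrt (∑ i ∈ s, w i * a i) := by
  have h := Real.sum_sqrt_mul_sqrt_le s hw (g := fun i => w i * a i)
    (fun i => mul_nonneg (hw i) (ha i))
  refine le_trans (le_of_eq (Finset.sum_congr rfl fun i _ => ?_)) h
  rw [Real.sqrt_mul (hw i), ← mul_assoc, Real.mul_self_sqrt (hw i)]

private lemma lhl_l1 {Z : Type*} [Fintype Z] (d : Z → ℝ) :
    ∑ z, |d z| ≤ Real.sqrt ((Fintype.card Z : ℝ) * ∑ z, d z ^ 2) := by
  have h := lhl_cs (univ : Finset Z) (fun _ => (1:ℝ)) (fun z => d z ^ 2)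
    (fun _ => zero_le_one) (fun z => sq_nonneg _)
  simp only [one_mul] at h
  calc ∑ z, |d z| = ∑ z, Real.sqrt (d z ^ 2) := by
        simp [Real.sqrt_sq_eq_abs]
    _ ≤ Real.sqrt (∑ _z : Z, (1:ℝ)) * Real.sqrt (∑ z, d z ^ 2) := h
    _ = Real.sqrt ((Fintype.card Z : ℝ) * ∑ z, d z ^ 2) := by
        rw [← Real.sqrt_mul (by positivity)]
        congr 2
        simp [Finset.sum_const, card_univ]

private lemma lhl_l2 {Z : Type*} [Fintype Z] (q : Z → ℝ) (s c : ℝ)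
    (hq : ∑ z, q z = s) (hc : ((Fintype.card Z : ℝ)) = c) (hc0 : c ≠ 0) :
    ∑ z, (q z - (1/c) * s)^2 = (∑ z, q z ^ 2) - (1/c) * s^2 := by
  have h1 : ∑ z, (q z - (1/c) * s)^2
      = ∑ z, (q z ^ 2 - 2*((1/c)*s) * q z + ((1/c)*s)^2) :=
    Finset.sum_congr rfl fun z _ => by ring
  rw [h1, Finset.sum_add_distrib, Finset.sum_sub_distrib, ← Finset.mul_sum, hq,
    Finset.sum_const, card_univ, nsmul_eq_mul, hc]
  field_simp
  ring

private lemma lhl_l3 {𝒳 Z : Type*} [Fintype 𝒳] [Fintype Z] [DecidableEq Z]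
    (g : 𝒳 → Z) (p : 𝒳 → ℝ) :
    ∑ z, (∑ x ∈ univ.filter (fun x => g x = z), p x) ^ 2
      = ∑ x, ∑ x', if g x = g x' then p x * p x' else 0 := by
  classical
  set Fz : Z → ℝ := fun z => ∑ x ∈ univ.filter (fun x => g x = z), p x with hFz
  have key := Finset.sum_fiberwise univ g (fun x => p x * Fz (g x))
  calc ∑ z, (Fz z) ^ 2
      = ∑ z, ∑ x ∈ univ.filter (fun x => g x = z), p x * Fz (g x) := by
        refine sum_congr rfl fun z _ => ?_
        have : Fz z * Fz z = (∑ x ∈ univ.filter (fun x => g x = z), p x) * Fz z := rfl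
        rw [sq, this, Finset.sum_mul]
        refine sum_congr rfl fun x hx => ?_
        rw [(Finset.mem_filter.mp hx).2]
    _ = ∑ x, p x * Fz (g x) := key
    _ = ∑ x, ∑ x', if g x = g x' then p x * p x' else 0 := by
        refine sum_congr rfl fun x _ => ?_
        rw [hFz]
        simp only []
        rw [Finset.sum_filter, Finset.mul_sum]
        refine sum_congr rfl fun x' _ => ?_
        by_cases h : g x = g x'
        · simp [h]
        · rw [if_neg h, if_neg (fun hh => h hh.symm), mul_zero]

set_option maxHeartbeats 1000000 in
private lemma lhl_aux {𝒳 ℰ F : Type*} [Fintype 𝒳] [Fintype ℰ] [Fintype F]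
    [Nonempty F] [DecidableEq 𝒳]
    (ℓ : ℕ) (δ : ℝ) (hash : F → 𝒳 → (Fin ℓ → Bool))
    (P : 𝒳 × ℰ → ℝ) (hP : ∀ p, 0 ≤ P p) (hPsum : ∑ p, P p = 1) (hδ : 0 ≤ δ)
    (htu : ∀ x x' : 𝒳, x ≠ x' →
      ((Finset.univ.filter (fun f : F => hash f x = hash f x')).card : ℝ) /
        (Fintype.card F : ℝ) ≤ δ)
    (Pe m : ℰ → ℝ) (hPe : ∀ e, Pe e = ∑ x, P (x, e))
    (hm : ∀ e x, P (x, e) ≤ m e) (hm0 : ∀ e, 0 ≤ m e) :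
    (1 / (Fintype.card F : ℝ)) * ∑ f : F, ∑ e : ℰ, ∑ z : Fin ℓ → Bool,
        |(∑ x ∈ Finset.univ.filter (fun x => hash f x = z), P (x, e)) -
          (1 / 2 ^ ℓ) * Pe e|
      ≤ Real.sqrt ((2 ^ ℓ * δ - 1) + 2 ^ ℓ * ∑ e, m e) := by
  classical
  set N : ℝ := (Fintype.card F : ℝ) with hNdef
  have hN : (0:ℝ) < N := by
    rw [hNdef]; exact_mod_cast Fintype.card_pos (α := F)
  set Q : F → (Fin ℓ → Bool) → ℰ → ℝ :=
    fun f z e => ∑ x ∈ Finset.univ.filter (fun x => hash f x = z), P (x, e) with hQdef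
  set S : F → ℰ → ℝ := fun f e => ∑ z, (Q f z e - (1 / 2 ^ ℓ) * Pe e) ^ 2 with hSdef
  have hPe0 : ∀ e, 0 ≤ Pe e := fun e => (hPe e) ▸ Finset.sum_nonneg (fun x _ => hP _)
  have hPeSum : ∑ e, Pe e = 1 := by
    simp_rw [hPe]
    rw [Finset.sum_comm, ← Fintype.sum_prod_type]
    exact hPsum
  set Ep : Finset ℰ := Finset.univ.filter (fun e => 0 < Pe e) with hEp
  have hPzero : ∀ e, e ∉ Ep → ∀ x, P (x, e) = 0 := by
    intro e he x
    have h0 : Pe e = 0 := by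
      by_contra h
      exact he (Finset.mem_filter.mpr ⟨Finset.mem_univ _, lt_of_le_of_ne (hPe0 e) (Ne.symm h)⟩)
    have := (Finset.sum_eq_zero_iff_of_nonneg (fun x _ => hP (x, e))).mp ((hPe e).symm.trans h0)
    exact this x (Finset.mem_univ x)
  have hPeSum' : ∑ e ∈ Ep, Pe e = 1 := by
    rw [← hPeSum]
    apply Finset.sum_filter_of_ne
    intro e _ hne
    exact lt_of_le_of_ne (hPe0 e) (Ne.symm hne)
  have hcardZ : ((Fintype.card (Fin ℓ → Bool) : ℝ)) = 2 ^ ℓ := by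
    simp
  have h2l : (0:ℝ) < 2 ^ ℓ := by positivity
  -- Step 1: per (f,e) Cauchy–Schwarz
  have step1 : ∀ f e, ∑ z, |Q f z e - (1 / 2 ^ ℓ) * Pe e| ≤ Real.sqrt (2 ^ ℓ * S f e) := by
    intro f e
    have := lhl_l1 (fun z => Q f z e - (1 / 2 ^ ℓ) * Pe e)
    rwa [hcardZ] at this
  -- sum of Q over z
  have hQsum : ∀ f e, ∑ z, Q f z e = Pe e := by
    intro f e
    rw [hPe]
    exact Finset.sum_fiberwise univ (hash f) (fun x => P (x, e))
  -- Step 2: expansion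
  have step2 : ∀ f e, S f e = (∑ z, (Q f z e) ^ 2) - (1 / 2 ^ ℓ) * (Pe e) ^ 2 := by
    intro f e
    exact lhl_l2 (fun z => Q f z e) (Pe e) (2 ^ ℓ) (hQsum f e) hcardZ (ne_of_gt h2l)
  -- Step 4: collision bound
  have step4 : ∀ e : ℰ, ∑ f : F, ∑ z, (Q f z e) ^ 2
      ≤ N * (∑ x, P (x, e) ^ 2) + δ * N * ((Pe e) ^ 2 - ∑ x, P (x, e) ^ 2) := by
    intro e
    have h3 : ∀ f : F, ∑ z, (Q f z e) ^ 2
        = ∑ x, ∑ x', if hash f x = hash f x' then P (x, e) * P (x', e) else 0 := by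
      intro f
      exact lhl_l3 (hash f) (fun x => P (x, e))
    calc ∑ f : F, ∑ z, (Q f z e) ^ 2
        = ∑ f : F, ∑ x, ∑ x', if hash f x = hash f x' then P (x, e) * P (x', e) else 0 :=
          Finset.sum_congr rfl fun f _ => h3 f
      _ = ∑ x, ∑ x', ∑ f : F, if hash f x = hash f x' then P (x, e) * P (x', e) else 0 := by
          rw [Finset.sum_comm]
          exact Finset.sum_congr rfl fun x _ => Finset.sum_comm
      _ = ∑ x, ∑ x', ((Finset.univ.filter (fun f : F => hash f x = hash f x')).card : ℝ)
            * (P (x, e) * P (x', e)) := by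
          refine Finset.sum_congr rfl fun x _ => Finset.sum_congr rfl fun x' _ => ?_
          rw [Finset.sum_ite, Finset.sum_const_zero, add_zero, Finset.sum_const, nsmul_eq_mul]
      _ ≤ N * (∑ x, P (x, e) ^ 2) + δ * N * ((Pe e) ^ 2 - ∑ x, P (x, e) ^ 2) := by
          have hsplit : ∀ x : 𝒳,
              ∑ x', ((Finset.univ.filter (fun f : F => hash f x = hash f x')).card : ℝ)
                * (P (x, e) * P (x', e))
              = N * (P (x, e) * P (x, e))
                + ∑ x' ∈ Finset.univ.erase x,
                    ((Finset.univ.filter (fun f : F => hash f x = hash f x')).card : ℝ)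
                      * (P (x, e) * P (x', e)) := by
            intro x
            rw [← Finset.add_sum_erase _ _ (Finset.mem_univ x)]
            congr 2
            rw [Finset.filter_true_of_mem (fun f _ => rfl), card_univ]
          have hbound : ∀ x : 𝒳, ∀ x' ∈ Finset.univ.erase x,
              ((Finset.univ.filter (fun f : F => hash f x = hash f x')).card : ℝ)
                * (P (x, e) * P (x', e))
              ≤ δ * N * (P (x, e) * P (x', e)) := by
            intro x x' hx'
            have hne : x ≠ x' := fun h => (Finset.mem_erase.mp hx').1 h.symm
            have hc := htu x x' hne
            rw [div_le_iff₀ hN] at hc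
            exact mul_le_mul_of_nonneg_right (by linarith)
              (mul_nonneg (hP (x, e)) (hP (x', e)))
          calc ∑ x, ∑ x', ((Finset.univ.filter (fun f : F => hash f x = hash f x')).card : ℝ)
                * (P (x, e) * P (x', e))
              ≤ ∑ x, (N * (P (x, e) * P (x, e))
                  + δ * N * ∑ x' ∈ Finset.univ.erase x, P (x, e) * P (x', e)) := by
                refine Finset.sum_le_sum fun x _ => ?_
                rw [hsplit x]
                refine add_le_add_right ?_ _
                rw [Finset.mul_sum]
                exact Finset.sum_le_sum (hbound x)
            _ = N * (∑ x, P (x, e) ^ 2) + δ * N * ((Pe e) ^ 2 - ∑ x, P (x, e) ^ 2) := by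
                rw [Finset.sum_add_distrib, ← Finset.mul_sum, ← Finset.mul_sum]
                congr 1
                · congr 1
                  exact Finset.sum_congr rfl fun x _ => by ring
                · congr 1
                  have herase : ∀ x : 𝒳, ∑ x' ∈ Finset.univ.erase x, P (x, e) * P (x', e)
                      = (∑ x', P (x, e) * P (x', e)) - P (x, e) * P (x, e) := by
                    intro x
                    rw [← Finset.add_sum_erase _ (fun x' => P (x, e) * P (x', e))
                      (Finset.mem_univ x)]
                    ring
                  rw [Finset.sum_congr rfl fun x _ => herase x, Finset.sum_sub_distrib]
                  have : ∑ x : 𝒳, ∑ x' : 𝒳, P (x, e) * P (x', e) = (Pe e) ^ 2 := by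
                    rw [← Finset.sum_mul_sum, ← hPe, sq]
                  rw [this]
                  congr 1
                  exact Finset.sum_congr rfl fun x _ => (sq (P (x, e))) ▸ rfl
  -- nonnegativity of S
  have hS0 : ∀ f e, 0 ≤ S f e := fun f e => Finset.sum_nonneg fun z _ => sq_nonneg _
  have hAle : ∀ e, ∑ x, P (x, e) ^ 2 ≤ m e * Pe e := by
    intro e
    rw [hPe, Finset.mul_sum]
    refine Finset.sum_le_sum fun x _ => ?_
    rw [sq]
    exact mul_le_mul_of_nonneg_right (hm e x) (hP _)
  have hA0 : ∀ e, (0:ℝ) ≤ ∑ x, P (x, e) ^ 2 := fun e => Finset.sum_nonneg fun x _ => sq_nonneg _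
  have hSsum : ∀ e, ∑ f : F, S f e
      ≤ N * (m e * Pe e + δ * (Pe e) ^ 2 - (1 / 2 ^ ℓ) * (Pe e) ^ 2) := by
    intro e
    have h2 : ∑ f : F, S f e
        = (∑ f : F, ∑ z, (Q f z e) ^ 2) - N * ((1 / 2 ^ ℓ) * (Pe e) ^ 2) := by
      rw [Finset.sum_congr rfl fun f _ => step2 f e, Finset.sum_sub_distrib,
        Finset.sum_const, card_univ, nsmul_eq_mul, hNdef]
    rw [h2]
    have h4 := step4 e
    have hAm := hAle e
    have hδA : 0 ≤ δ * ∑ x, P (x, e) ^ 2 := mul_nonneg hδ (hA0 e)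
    nlinarith [hN.le]
  have step5 : ∀ e ∈ Ep,
      ∑ f : F, (Pe e / N) * (2 ^ ℓ * S f e / (Pe e) ^ 2)
        ≤ 2 ^ ℓ * m e + (2 ^ ℓ * δ - 1) * Pe e := by
    intro e he
    have hpe : 0 < Pe e := (Finset.mem_filter.mp he).2
    have hrw : ∑ f : F, (Pe e / N) * (2 ^ ℓ * S f e / (Pe e) ^ 2)
        = (2 ^ ℓ / (N * Pe e)) * ∑ f : F, S f e := by
      rw [Finset.mul_sum]
      refine Finset.sum_congr rfl fun f _ => ?_
      field_simp
    rw [hrw]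
    calc (2 ^ ℓ / (N * Pe e)) * ∑ f : F, S f e
        ≤ (2 ^ ℓ / (N * Pe e))
            * (N * (m e * Pe e + δ * (Pe e) ^ 2 - (1 / 2 ^ ℓ) * (Pe e) ^ 2)) :=
          mul_le_mul_of_nonneg_left (hSsum e) (by positivity)
      _ = 2 ^ ℓ * m e + (2 ^ ℓ * δ - 1) * Pe e := by
          field_simp
          ring
  -- main chain
  calc (1 / N) * ∑ f : F, ∑ e : ℰ, ∑ z, |Q f z e - (1 / 2 ^ ℓ) * Pe e|
      = ∑ f : F, ∑ e ∈ Ep, (1 / N) * ∑ z, |Q f z e - (1 / 2 ^ ℓ) * Pe e| := by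
        rw [Finset.mul_sum]
        refine Finset.sum_congr rfl fun f _ => ?_
        rw [Finset.mul_sum]
        symm
        apply Finset.sum_subset (Finset.filter_subset _ _)
        intro e _ he
        have hpe0 : Pe e = 0 := by
          rw [hPe]
          exact Finset.sum_eq_zero fun x _ => hPzero e he x
        have hQ0 : ∀ z, Q f z e = 0 := fun z =>
          Finset.sum_eq_zero fun x _ => hPzero e he x
        simp [hpe0, hQ0]
    _ ≤ ∑ f : F, ∑ e ∈ Ep, (Pe e / N) * Real.sqrt (2 ^ ℓ * S f e / (Pe e) ^ 2) := by
        refine Finset.sum_le_sum fun f _ => Finset.sum_le_sum fun e he => ?_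
        have hpe : 0 < Pe e := (Finset.mem_filter.mp he).2
        have hsq : Real.sqrt (2 ^ ℓ * S f e / (Pe e) ^ 2)
            = Real.sqrt (2 ^ ℓ * S f e) / Pe e := by
          rw [Real.sqrt_div (mul_nonneg h2l.le (hS0 f e)), Real.sqrt_sq hpe.le]
        rw [hsq]
        calc (1 / N) * ∑ z, |Q f z e - (1 / 2 ^ ℓ) * Pe e|
            ≤ (1 / N) * Real.sqrt (2 ^ ℓ * S f e) :=
              mul_le_mul_of_nonneg_left (step1 f e) (by positivity)
          _ = (Pe e / N) * (Real.sqrt (2 ^ ℓ * S f e) / Pe e) := by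
              field_simp
    _ = ∑ p ∈ Finset.univ ×ˢ Ep,
          (Pe p.2 / N) * Real.sqrt (2 ^ ℓ * S p.1 p.2 / (Pe p.2) ^ 2) :=
        by rw [Finset.sum_product]
    _ ≤ Real.sqrt (∑ p ∈ Finset.univ ×ˢ Ep, Pe p.2 / N)
          * Real.sqrt (∑ p ∈ Finset.univ ×ˢ Ep,
              (Pe p.2 / N) * (2 ^ ℓ * S p.1 p.2 / (Pe p.2) ^ 2)) :=
        lhl_cs _ _ _ (fun p => div_nonneg (hPe0 p.2) hN.le)
          (fun p => div_nonneg (mul_nonneg h2l.le (hS0 p.1 p.2)) (sq_nonneg _))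
    _ ≤ Real.sqrt ((2 ^ ℓ * δ - 1) + 2 ^ ℓ * ∑ e, m e) := by
        have h1 : ∑ p ∈ (Finset.univ : Finset F) ×ˢ Ep, Pe p.2 / N = 1 := by
          rw [Finset.sum_product]
          show ∑ _f : F, ∑ e ∈ Ep, Pe e / N = 1
          have heq : ∑ _f : F, ∑ e ∈ Ep, Pe e / N = ∑ _f : F, 1 / N :=
            Finset.sum_congr rfl fun f _ => by rw [← Finset.sum_div, hPeSum']
          rw [heq, Finset.sum_const, card_univ, nsmul_eq_mul, ← hNdef]
          field_simp
        have h2 : ∑ p ∈ (Finset.univ : Finset F) ×ˢ Ep,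
            (Pe p.2 / N) * (2 ^ ℓ * S p.1 p.2 / (Pe p.2) ^ 2)
            ≤ (2 ^ ℓ * δ - 1) + 2 ^ ℓ * ∑ e, m e := by
          rw [Finset.sum_product]
          show ∑ f : F, ∑ e ∈ Ep, (Pe e / N) * (2 ^ ℓ * S f e / (Pe e) ^ 2) ≤ _
          rw [Finset.sum_comm]
          calc ∑ e ∈ Ep, ∑ f : F, (Pe e / N) * (2 ^ ℓ * S f e / (Pe e) ^ 2)
              ≤ ∑ e ∈ Ep, (2 ^ ℓ * m e + (2 ^ ℓ * δ - 1) * Pe e) :=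
                Finset.sum_le_sum step5
            _ = 2 ^ ℓ * (∑ e ∈ Ep, m e) + (2 ^ ℓ * δ - 1) * ∑ e ∈ Ep, Pe e := by
                rw [Finset.sum_add_distrib, Finset.mul_sum, Finset.mul_sum]
            _ ≤ (2 ^ ℓ * δ - 1) + 2 ^ ℓ * ∑ e, m e := by
                rw [hPeSum', mul_one, add_comm]
                refine add_le_add_right ?_ _
                refine mul_le_mul_of_nonneg_left ?_ h2l.le
                exact Finset.sum_le_sum_of_subset_of_nonneg
                  (Finset.filter_subset _ _) (fun e _ _ => hm0 e)
        rw [h1, Real.sqrt_one, one_mul]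
        exact Real.sqrt_le_sqrt h2

/-- Classical Leftover Hash Lemma for δ-almost two-universal hashing: the
expected (over uniform `f`) statistical distance of `(f(X), E)` from
uniform × `P_E` is at most `(1/2)·√((2^ℓ δ − 1) + 2^{ℓ − H_min(X|E)})`. -/
theorem classical_leftover_hash_lemma_almost_two_universal
    (𝒳 ℰ F : Type*) [Fintype 𝒳] [Fintype ℰ] [Fintype F]
    [Nonempty 𝒳] [Nonempty ℰ] [Nonempty F] [DecidableEq 𝒳]
    (ℓ : ℕ) (δ : ℝ) (hash : F → 𝒳 → (Fin ℓ → Bool))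
    (P : 𝒳 × ℰ → ℝ) (hP : ∀ p, 0 ≤ P p) (hPsum : ∑ p, P p = 1)
    (hδ : 0 ≤ δ)
    (htu : ∀ x x' : 𝒳, x ≠ x' →
      ((Finset.univ.filter (fun f : F => hash f x = hash f x')).card : ℝ) /
        (Fintype.card F : ℝ) ≤ δ) :
    (1 / (Fintype.card F : ℝ)) * ∑ f : F, (1 / 2) *
        ∑ z : Fin ℓ → Bool, ∑ e : ℰ,
          |(∑ x ∈ Finset.univ.filter (fun x => hash f x = z), P (x, e)) -
            (1 / 2 ^ ℓ) * ∑ x : 𝒳, P (x, e)|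
      ≤ (1 / 2) * Real.sqrt ((2 ^ ℓ * δ - 1) + (2 : ℝ) ^ ((ℓ : ℝ) -
          (- Real.logb 2 (∑ e : ℰ,
              Finset.univ.sup' Finset.univ_nonempty (fun x : 𝒳 => P (x, e)))))) := by
  classical
  have hm : ∀ (e : ℰ) (x : 𝒳),
      P (x, e) ≤ Finset.univ.sup' Finset.univ_nonempty (fun x : 𝒳 => P (x, e)) :=
    fun e x => Finset.le_sup' (fun x : 𝒳 => P (x, e)) (Finset.mem_univ x)
  have hm0 : ∀ e : ℰ, 0 ≤ Finset.univ.sup' Finset.univ_nonempty (fun x : 𝒳 => P (x, e)) :=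
    fun e => le_trans (hP (Classical.arbitrary 𝒳, e)) (hm e _)
  have hsum1 : ∑ e : ℰ, ∑ x : 𝒳, P (x, e) = 1 := by
    rw [Finset.sum_comm, ← Fintype.sum_prod_type]; exact hPsum
  obtain ⟨e₀, he₀⟩ : ∃ e : ℰ, 0 < ∑ x : 𝒳, P (x, e) := by
    by_contra h; push_neg at h
    have h2 : ∑ e : ℰ, ∑ x : 𝒳, P (x, e) ≤ 0 := Finset.sum_nonpos fun e _ => h e
    linarith
  obtain ⟨x₀, hx₀⟩ : ∃ x : 𝒳, 0 < P (x, e₀) := by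
    by_contra h; push_neg at h
    have h2 : ∑ x : 𝒳, P (x, e₀) ≤ 0 := Finset.sum_nonpos fun x _ => h x
    linarith
  have hM : 0 < ∑ e : ℰ, Finset.univ.sup' Finset.univ_nonempty (fun x : 𝒳 => P (x, e)) :=
    lt_of_lt_of_le (lt_of_lt_of_le hx₀ (hm e₀ x₀))
      (Finset.single_le_sum (fun e _ => hm0 e) (Finset.mem_univ e₀))
  have hrpow : (2 : ℝ) ^ ((ℓ : ℝ) - (- Real.logb 2 (∑ e : ℰ,
        Finset.univ.sup' Finset.univ_nonempty (fun x : 𝒳 => P (x, e)))))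
      = 2 ^ ℓ * ∑ e : ℰ, Finset.univ.sup' Finset.univ_nonempty (fun x : 𝒳 => P (x, e)) := by
    rw [sub_neg_eq_add, Real.rpow_add two_pos, Real.rpow_natCast,
      Real.rpow_logb two_pos (by norm_num) hM]
  rw [hrpow]
  have key := lhl_aux ℓ δ hash P hP hPsum hδ htu
    (fun e => ∑ x : 𝒳, P (x, e))
    (fun e => Finset.univ.sup' Finset.univ_nonempty (fun x : 𝒳 => P (x, e)))
    (fun e => rfl) hm hm0
  have hL : (1 / (Fintype.card F : ℝ)) * ∑ f : F, (1 / 2) *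
        ∑ z : Fin ℓ → Bool, ∑ e : ℰ,
          |(∑ x ∈ Finset.univ.filter (fun x => hash f x = z), P (x, e)) -
            (1 / 2 ^ ℓ) * ∑ x : 𝒳, P (x, e)|
      = (1 / 2) * ((1 / (Fintype.card F : ℝ)) * ∑ f : F, ∑ e : ℰ,
          ∑ z : Fin ℓ → Bool,
          |(∑ x ∈ Finset.univ.filter (fun x => hash f x = z), P (x, e)) -
            (1 / 2 ^ ℓ) * ∑ x : 𝒳, P (x, e)|) := by
    rw [← Finset.mul_sum]
    rw [show ∀ a : ℝ, (1 / (Fintype.card F : ℝ)) * ((1/2) * a) = (1/2) * ((1 / (Fintype.card F : ℝ)) * a) from fun a => by ring]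
    congr 2
    exact Finset.sum_congr rfl fun f _ => Finset.sum_comm
  rw [hL]
  exact mul_le_mul_of_nonneg_left key (by norm_num)
end

section
/- For a classical joint distribution P on 𝒳 × ℰ, the min-entropy H_min(X|E) := max over distributions Q on ℰ of the largest λ such that P(x,e) ≤ 2^{−λ} Q(e) for all x, e equals −log Σ_e P_E(e) max_x P_{X|E=e}(x), i.e., −log of the optimal guessing probability of X given E. -/
/-- Operational interpretation of the classical conditional min-entropy:
`H_min(X|E) := sup over distributions Q on ℰ of sup{λ : P(x,e) ≤ 2^{−λ} Q(e)}`
equals `−log₂` of the optimal guessing probability `Σ_e max_x P(x,e)`. -/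
theorem classical_min_entropy_eq_guessing
    (𝒳 ℰ : Type*) [Fintype 𝒳] [Fintype ℰ] [Nonempty 𝒳] [Nonempty ℰ]
    (P : 𝒳 × ℰ → ℝ) (hP : ∀ p, 0 ≤ P p) (hPsum : ∑ p, P p = 1) :
    sSup {lam : ℝ | ∃ Q : ℰ → ℝ, (∀ e, 0 ≤ Q e) ∧ (∑ e, Q e) = 1 ∧
        ∀ x e, P (x, e) ≤ (2 : ℝ) ^ (-lam) * Q e}
      = - Real.logb 2 (∑ e : ℰ,
          Finset.univ.sup' Finset.univ_nonempty (fun x : 𝒳 => P (x, e))) := by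
  set g : ℝ := ∑ e : ℰ, Finset.univ.sup' Finset.univ_nonempty (fun x : 𝒳 => P (x, e)) with hg
  have hsupnn : ∀ e : ℰ, 0 ≤ Finset.univ.sup' Finset.univ_nonempty (fun x : 𝒳 => P (x, e)) := by
    intro e
    obtain ⟨x⟩ := (inferInstance : Nonempty 𝒳)
    exact le_trans (hP (x, e)) (Finset.le_sup' (f := fun x : 𝒳 => P (x, e)) (Finset.mem_univ x))
  have hgpos : 0 < g := by
    have h1 : (0:ℝ) < 1 := one_pos
    rw [← hPsum] at h1
    obtain ⟨p, -, hp⟩ := Finset.exists_lt_of_sum_lt (by simpa using h1 : ∑ _ : 𝒳 × ℰ, (0:ℝ) < ∑ p, P p)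
    have hle : P p ≤ g := by
      calc P p ≤ Finset.univ.sup' Finset.univ_nonempty (fun x : 𝒳 => P (x, p.2)) :=
            Finset.le_sup' (f := fun x : 𝒳 => P (x, p.2)) (Finset.mem_univ p.1)
        _ ≤ g := Finset.single_le_sum (f := fun e : ℰ =>
            Finset.univ.sup' Finset.univ_nonempty (fun x : 𝒳 => P (x, e)))
            (fun e _ => hsupnn e) (Finset.mem_univ p.2)
    linarith
  have hpow : (2:ℝ) ^ (-(-Real.logb 2 g)) = g := by
    rw [neg_neg]
    exact Real.rpow_logb (by norm_num) (by norm_num) hgpos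
  -- the candidate value is in the set
  have hmem : (-Real.logb 2 g) ∈ {lam : ℝ | ∃ Q : ℰ → ℝ, (∀ e, 0 ≤ Q e) ∧ (∑ e, Q e) = 1 ∧
      ∀ x e, P (x, e) ≤ (2 : ℝ) ^ (-lam) * Q e} := by
    refine ⟨fun e => Finset.univ.sup' Finset.univ_nonempty (fun x : 𝒳 => P (x, e)) / g,
      fun e => div_nonneg (hsupnn e) hgpos.le, ?_, ?_⟩
    · rw [← Finset.sum_div, ← hg, div_self hgpos.ne']
    · intro x e
      rw [hpow, mul_div_cancel₀ _ hgpos.ne']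
      exact Finset.le_sup' (f := fun x : 𝒳 => P (x, e)) (Finset.mem_univ x)
  -- any feasible lam is ≤ the candidate
  have hub : ∀ lam ∈ {lam : ℝ | ∃ Q : ℰ → ℝ, (∀ e, 0 ≤ Q e) ∧ (∑ e, Q e) = 1 ∧
      ∀ x e, P (x, e) ≤ (2 : ℝ) ^ (-lam) * Q e}, lam ≤ -Real.logb 2 g := by
    rintro lam ⟨Q, hQ0, hQ1, hQP⟩
    have hgle : g ≤ (2:ℝ) ^ (-lam) := by
      calc g ≤ ∑ e : ℰ, (2:ℝ) ^ (-lam) * Q e := by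
            apply Finset.sum_le_sum
            intro e _
            exact Finset.sup'_le _ _ (fun x _ => hQP x e)
        _ = (2:ℝ) ^ (-lam) := by rw [← Finset.mul_sum, hQ1, mul_one]
    have := Real.logb_le_logb_of_le (by norm_num : (1:ℝ) < 2) hgpos hgle
    rwa [Real.logb_rpow (by norm_num : (0:ℝ) < 2) (by norm_num), le_neg] at this
  exact le_antisymm (csSup_le ⟨_, hmem⟩ hub) (le_csSup ⟨_, hub⟩ hmem)
end

section
/- Hölder inequality for three operators in trace norm: for linear operators A, B, C on a finite-dimensional Hilbert space and positive reals r, s, t with 1/r + 1/s + 1/t = 1, one has ‖ABC‖₁ ≤ (‖|A|^r‖₁)^{1/r} · (‖|B|^s‖₁)^{1/s} · (‖|C|^t‖₁)^{1/t}. -/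
open Matrix Kronecker ComplexOrder

noncomputable section

/-- Apply a real function to the eigenvalues of a Hermitian matrix
(functional calculus); returns `0` on non-Hermitian input. -/
def hermCFC {n : Type*} [Fintype n] [DecidableEq n] (f : ℝ → ℝ)
    (M : Matrix n n ℂ) : Matrix n n ℂ :=
  if h : M.IsHermitian then h.cfc f else 0

/-- The operator absolute value `|M| = √(Mᴴ M)`. -/
def matAbs {n : Type*} [Fintype n] [DecidableEq n] (M : Matrix n n ℂ) :
    Matrix n n ℂ :=
  (Matrix.posSemidef_conjTranspose_mul_self M).1.eigenvectorUnitary.1 *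
    diagonal (((↑) : ℝ → ℂ) ∘ (√·) ∘ (Matrix.posSemidef_conjTranspose_mul_self M).1.eigenvalues) *
    (star (Matrix.posSemidef_conjTranspose_mul_self M).1.eigenvectorUnitary : Matrix n n ℂ)

/-- The trace norm `‖M‖₁ = tr |M|`. -/
def traceNorm {n : Type*} [Fintype n] [DecidableEq n] (M : Matrix n n ℂ) : ℝ :=
  (matAbs M).trace.re

/-- Real power of a (Hermitian) matrix via eigenvalues. -/
def matRpow {n : Type*} [Fintype n] [DecidableEq n] (r : ℝ)
    (M : Matrix n n ℂ) : Matrix n n ℂ :=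
  hermCFC (fun x => x ^ r) M

namespace TNH

variable {d : ℕ}

/-- squared ℓ² norm of a complex vector -/
def n2sq (x : Fin d → ℂ) : ℝ := ∑ i, ‖x i‖^2

lemma n2sq_nonneg (x : Fin d → ℂ) : 0 ≤ n2sq x :=
  Finset.sum_nonneg fun i _ => sq_nonneg _

lemma n2sq_eq_re (x : Fin d → ℂ) : n2sq x = (star x ⬝ᵥ x).re := by
  simp only [n2sq, dotProduct, Pi.star_apply, Complex.re_sum]
  refine Finset.sum_congr rfl fun i _ => ?_
  have : (star (x i)) * x i = ((Complex.normSq (x i) : ℝ) : ℂ) := by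
    rw [RCLike.star_def, mul_comm, Complex.mul_conj]
  rw [this, Complex.ofReal_re, Complex.normSq_eq_norm_sq]

/-- contraction predicate -/
def con (M : Matrix (Fin d) (Fin d) ℂ) : Prop := ∀ x, n2sq (M *ᵥ x) ≤ n2sq x

lemma con_mul {M N : Matrix (Fin d) (Fin d) ℂ} (hM : con M) (hN : con N) :
    con (M * N) := fun x => by
  rw [← Matrix.mulVec_mulVec]
  exact (hM _).trans (hN x)

lemma con_diagonal {v : Fin d → ℂ} (h : ∀ i, ‖v i‖ ≤ 1) : con (diagonal v) := by
  intro x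
  unfold n2sq
  refine Finset.sum_le_sum fun i _ => ?_
  rw [Matrix.mulVec_diagonal, norm_mul, mul_pow]
  have hv1 : ‖v i‖^2 ≤ 1 := by nlinarith [h i, norm_nonneg (v i)]
  exact mul_le_of_le_one_left (sq_nonneg _) hv1

/-- Cauchy–Schwarz for the dot product, squared form. -/
lemma dot_cs_sq (x y : Fin d → ℂ) : ‖star x ⬝ᵥ y‖^2 ≤ n2sq x * n2sq y := by
  have h1 : ‖star x ⬝ᵥ y‖ ≤ ∑ i, ‖x i‖ * ‖y i‖ := by
    refine (norm_sum_le _ _).trans ?_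
    refine Finset.sum_le_sum fun i _ => ?_
    simp [norm_mul]
  have h2 : (∑ i, ‖x i‖ * ‖y i‖)^2 ≤ n2sq x * n2sq y :=
    Finset.sum_mul_sq_le_sq_mul_sq _ _ _
  calc ‖star x ⬝ᵥ y‖^2 ≤ (∑ i, ‖x i‖ * ‖y i‖)^2 := by
        apply pow_le_pow_left₀ (norm_nonneg _) h1
    _ ≤ _ := h2

lemma con_conjTranspose {M : Matrix (Fin d) (Fin d) ℂ} (hM : con M) : con Mᴴ := by
  intro x
  set y := Mᴴ *ᵥ x with hy
  have key : star y ⬝ᵥ y = star x ⬝ᵥ (M *ᵥ y) := by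
    rw [hy, Matrix.star_mulVec, conjTranspose_conjTranspose, ← Matrix.dotProduct_mulVec]
  have h1 : n2sq y ≤ ‖star x ⬝ᵥ (M *ᵥ y)‖ := by
    rw [n2sq_eq_re, key]
    exact Complex.re_le_norm _
  have h2 : (n2sq y)^2 ≤ n2sq x * n2sq y := by
    calc (n2sq y)^2 ≤ ‖star x ⬝ᵥ (M *ᵥ y)‖^2 := by
          apply pow_le_pow_left₀ (n2sq_nonneg _) h1
      _ ≤ n2sq x * n2sq (M *ᵥ y) := dot_cs_sq _ _
      _ ≤ n2sq x * n2sq y := by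
          exact mul_le_mul_of_nonneg_left (hM y) (n2sq_nonneg x)
  rcases eq_or_lt_of_le (n2sq_nonneg y) with h | h
  · rw [← h]; exact n2sq_nonneg x
  · nlinarith

lemma con_of_unitary {U : Matrix (Fin d) (Fin d) ℂ}
    (hU : U ∈ Matrix.unitaryGroup (Fin d) ℂ) : con U := by
  intro x
  rw [n2sq_eq_re, n2sq_eq_re, Matrix.star_mulVec, ← Matrix.dotProduct_mulVec,
    Matrix.mulVec_mulVec]
  have : Uᴴ * U = 1 := by
    simpa [Matrix.star_eq_conjTranspose] using hU.1
  rw [this, Matrix.one_mulVec]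

lemma col_bound {M : Matrix (Fin d) (Fin d) ℂ} (hM : con M) (j : Fin d) :
    ∑ i, ‖M i j‖^2 ≤ 1 := by
  have := hM (Pi.single j 1)
  have hv : M *ᵥ Pi.single j 1 = fun i => M i j := by
    ext i
    simp [Matrix.mulVec, dotProduct, Pi.single_apply]
  rw [hv] at this
  refine this.trans ?_
  unfold n2sq
  rw [Finset.sum_eq_single j]
  · simp
  · intro b _ hb; simp [Pi.single_apply, hb]
  · simp

lemma entry_bound {M : Matrix (Fin d) (Fin d) ℂ} (hM : con M) (i j : Fin d) :
    ‖M i j‖ ≤ 1 := by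
  have h := col_bound hM j
  have h1 : ‖M i j‖^2 ≤ 1 := by
    refine le_trans ?_ h
    exact Finset.single_le_sum (fun k _ => sq_nonneg ‖M k j‖) (Finset.mem_univ i)
  nlinarith [norm_nonneg (M i j)]


lemma trace2 (R T : Matrix (Fin d) (Fin d) ℂ) (x y : Fin d → ℂ) :
    (R * diagonal x * T * diagonal y).trace = ∑ i, ∑ j, R i j * x j * T j i * y i := by
  simp only [Matrix.trace, Matrix.diag_apply, Matrix.mul_apply, Matrix.diagonal_apply,
    ite_mul, zero_mul, mul_ite, mul_zero, Finset.sum_ite_eq, Finset.sum_ite_eq',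
    Finset.mem_univ, if_true, Finset.sum_mul, Finset.mul_sum]

lemma trace3 (M N P : Matrix (Fin d) (Fin d) ℂ) (x y w : Fin d → ℂ) :
    (M * diagonal x * N * diagonal y * P * diagonal w).trace
      = ∑ i, ∑ j, ∑ k, M i j * x j * N j k * y k * P k i * w i := by
  simp only [Matrix.trace, Matrix.diag_apply, Matrix.mul_apply, Matrix.diagonal_apply,
    ite_mul, zero_mul, mul_ite, mul_zero, Finset.sum_ite_eq, Finset.sum_ite_eq',
    Finset.mem_univ, if_true, Finset.sum_mul, Finset.mul_sum]
  refine Finset.sum_congr rfl fun i _ => ?_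
  rw [Finset.sum_comm]

/-- complex power with base a nonneg real, junk value 0 at 0 -/
def cpw (a : ℝ) (w : ℂ) : ℂ := if a = 0 then 0 else Complex.exp (w * (Real.log a : ℂ))

lemma norm_cpw_le {a : ℝ} (ha : 0 ≤ a) (w : ℂ) : ‖cpw a w‖ ≤ a ^ w.re := by
  unfold cpw
  split_ifs with h
  · simpa using Real.rpow_nonneg ha _
  · have ha' : 0 < a := lt_of_le_of_ne ha (Ne.symm h)
    rw [Complex.norm_exp]
    apply le_of_eq
    rw [Real.rpow_def_of_pos ha']
    congr 1
    simp [Complex.mul_re, mul_comm]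

lemma cpw_one {a : ℝ} (ha : 0 ≤ a) : cpw a 1 = (a : ℂ) := by
  unfold cpw
  split_ifs with h
  · simp [h]
  · rw [one_mul, ← Complex.ofReal_exp, Real.exp_log (lt_of_le_of_ne ha (Ne.symm h))]

lemma cpw_differentiable (a : ℝ) {g : ℂ → ℂ} (hg : Differentiable ℂ g) :
    Differentiable ℂ (fun z => cpw a (g z)) := by
  unfold cpw
  split_ifs with h
  · exact differentiable_const 0
  · exact (hg.mul_const _).cexp

/-- doubly substochastic pointwise Hölder bound -/
lemma sum_bound {S : Fin d → Fin d → ℝ} (hS : ∀ i j, 0 ≤ S i j)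
    (hrow : ∀ i, ∑ j, S i j ≤ 1) (hcol : ∀ j, ∑ i, S i j ≤ 1)
    {u v : Fin d → ℝ} (hu : ∀ j, 0 ≤ u j) (hv : ∀ i, 0 ≤ v i)
    {μ : ℝ} (hμ0 : 0 ≤ μ) (hμ1 : μ ≤ 1) :
    ∑ i, ∑ j, S i j * (u j ^ μ * v i ^ (1-μ))
      ≤ (∑ j, u j) ^ μ * (∑ i, v i) ^ (1-μ) := by
  set U := ∑ j, u j with hU
  set V := ∑ i, v i with hV
  have hUnn : 0 ≤ U := Finset.sum_nonneg fun j _ => hu j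
  have hVnn : 0 ≤ V := Finset.sum_nonneg fun i _ => hv i
  rcases eq_or_lt_of_le hμ0 with h0 | h0
  · -- μ = 0
    rw [← h0]
    simp only [Real.rpow_zero, sub_zero, Real.rpow_one, one_mul]
    calc ∑ i, ∑ j, S i j * v i = ∑ i, (∑ j, S i j) * v i := by
          simp [Finset.sum_mul]
      _ ≤ ∑ i, 1 * v i :=
          Finset.sum_le_sum fun i _ => mul_le_mul_of_nonneg_right (hrow i) (hv i)
      _ = V := by simp [hV]
  rcases eq_or_lt_of_le hμ1 with h1 | h1
  · -- μ = 1
    rw [h1]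
    simp only [Real.rpow_one, sub_self, Real.rpow_zero, mul_one]
    rw [Finset.sum_comm]
    calc ∑ j, ∑ i, S i j * u j = ∑ j, (∑ i, S i j) * u j := by
          simp [Finset.sum_mul]
      _ ≤ ∑ j, 1 * u j :=
          Finset.sum_le_sum fun j _ => mul_le_mul_of_nonneg_right (hcol j) (hu j)
      _ = U := by simp [hU]
  -- 0 < μ < 1
  rcases eq_or_lt_of_le hUnn with hU0 | hU0
  · have hz : ∀ j, u j = 0 := by
      intro j
      have := (Finset.sum_eq_zero_iff_of_nonneg (fun j _ => hu j)).mp hU0.symm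
      exact this j (Finset.mem_univ j)
    have hzz : ∀ i j, S i j * (u j ^ μ * v i ^ (1-μ)) = 0 := by
      intro i j; rw [hz j, Real.zero_rpow (ne_of_gt h0)]; ring
    simp only [hzz, Finset.sum_const_zero]
    positivity
  rcases eq_or_lt_of_le hVnn with hV0 | hV0
  · have hz : ∀ i, v i = 0 := by
      intro i
      have := (Finset.sum_eq_zero_iff_of_nonneg (fun i _ => hv i)).mp hV0.symm
      exact this i (Finset.mem_univ i)
    have hzz : ∀ i j, S i j * (u j ^ μ * v i ^ (1-μ)) = 0 := by
      intro i j
      rw [hz i, Real.zero_rpow (by intro hc; linarith : (1:ℝ)-μ ≠ 0)]; ring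
    simp only [hzz, Finset.sum_const_zero]
    positivity
  -- U, V > 0
  set K := U ^ μ * V ^ (1-μ) with hK
  have hKpos : 0 < K :=
    mul_pos (Real.rpow_pos_of_pos hU0 _) (Real.rpow_pos_of_pos hV0 _)
  have point : ∀ i j, u j ^ μ * v i ^ (1-μ)
      ≤ K * (μ * (u j / U) + (1-μ) * (v i / V)) := by
    intro i j
    have hgm := Real.geom_mean_le_arith_mean2_weighted hμ0 (by linarith : (0:ℝ) ≤ 1-μ)
      (div_nonneg (hu j) hUnn) (div_nonneg (hv i) hVnn) (by ring)
    have hrw : (u j / U) ^ μ * (v i / V) ^ (1-μ)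
        = u j ^ μ * v i ^ (1-μ) / K := by
      rw [Real.div_rpow (hu j) hUnn, Real.div_rpow (hv i) hVnn, hK]
      ring
    rw [hrw, div_le_iff₀ hKpos] at hgm
    linarith [hgm]
  have t1 : ∑ i, ∑ j, S i j * (μ * (u j / U)) ≤ μ := by
    rw [Finset.sum_comm]
    calc ∑ j, ∑ i, S i j * (μ * (u j / U))
        = ∑ j, (∑ i, S i j) * (μ * (u j / U)) := by simp [Finset.sum_mul]
      _ ≤ ∑ j, 1 * (μ * (u j / U)) := by
          refine Finset.sum_le_sum fun j _ => mul_le_mul_of_nonneg_right (hcol j) ?_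
          have := hu j
          positivity
      _ = (μ / U) * ∑ j, u j := by
          rw [Finset.mul_sum]
          refine Finset.sum_congr rfl fun j _ => by ring
      _ = μ := by
          rw [← hU]; field_simp
  have t2 : ∑ i, ∑ j, S i j * ((1-μ) * (v i / V)) ≤ 1-μ := by
    calc ∑ i, ∑ j, S i j * ((1-μ) * (v i / V))
        = ∑ i, (∑ j, S i j) * ((1-μ) * (v i / V)) := by simp [Finset.sum_mul]
      _ ≤ ∑ i, 1 * ((1-μ) * (v i / V)) := by
          refine Finset.sum_le_sum fun i _ => mul_le_mul_of_nonneg_right (hrow i) ?_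
          have h1μ : (0:ℝ) ≤ 1-μ := by linarith
          have := hv i
          positivity
      _ = ((1-μ) / V) * ∑ i, v i := by
          rw [Finset.mul_sum]
          refine Finset.sum_congr rfl fun i _ => by ring
      _ = 1-μ := by
          rw [← hV]; field_simp
  calc ∑ i, ∑ j, S i j * (u j ^ μ * v i ^ (1-μ))
      ≤ ∑ i, ∑ j, S i j * (K * (μ * (u j / U) + (1-μ) * (v i / V))) := by
        refine Finset.sum_le_sum fun i _ => Finset.sum_le_sum fun j _ => ?_
        exact mul_le_mul_of_nonneg_left (point i j) (hS i j)
    _ = K * (∑ i, ∑ j, S i j * (μ * (u j / U)))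
        + K * (∑ i, ∑ j, S i j * ((1-μ) * (v i / V))) := by
        simp only [Finset.mul_sum, ← Finset.sum_add_distrib]
        refine Finset.sum_congr rfl fun i _ => Finset.sum_congr rfl fun j _ => by ring
    _ ≤ K * μ + K * (1-μ) :=
        add_le_add (mul_le_mul_of_nonneg_left t1 hKpos.le)
          (mul_le_mul_of_nonneg_left t2 hKpos.le)
    _ = K := by ring

lemma cs_le_one {f g : Fin d → ℝ} (hf : ∀ i, 0 ≤ f i) (hg : ∀ i, 0 ≤ g i)
    (hf2 : ∑ i, f i ^ 2 ≤ 1) (hg2 : ∑ i, g i ^ 2 ≤ 1) : ∑ i, f i * g i ≤ 1 := by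
  have h1 : (∑ i, f i * g i)^2 ≤ (∑ i, f i ^ 2) * (∑ i, g i ^ 2) :=
    Finset.sum_mul_sq_le_sq_mul_sq _ _ _
  have h2 : 0 ≤ ∑ i, f i * g i :=
    Finset.sum_nonneg fun i _ => mul_nonneg (hf i) (hg i)
  nlinarith [Finset.sum_nonneg (fun i (_ : i ∈ Finset.univ) => sq_nonneg (f i)),
    Finset.sum_nonneg (fun i (_ : i ∈ Finset.univ) => sq_nonneg (g i))]

lemma bilinear {R T : Matrix (Fin d) (Fin d) ℂ}
    (hR : con R) (hR' : con Rᴴ) (hT : con T) (hT' : con Tᴴ)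
    {u v : Fin d → ℝ} (hu : ∀ j, 0 ≤ u j) (hv : ∀ i, 0 ≤ v i)
    {μ : ℝ} (hμ0 : 0 ≤ μ) (hμ1 : μ ≤ 1)
    {x y : Fin d → ℂ} (hx : ∀ j, ‖x j‖ ≤ u j ^ μ) (hy : ∀ i, ‖y i‖ ≤ v i ^ (1-μ)) :
    ‖(R * diagonal x * T * diagonal y).trace‖ ≤ (∑ j, u j) ^ μ * (∑ i, v i) ^ (1-μ) := by
  rw [trace2]
  have hRH : ∀ i j, ‖Rᴴ i j‖ = ‖R j i‖ := by
    intro i j; rw [Matrix.conjTranspose_apply, norm_star]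
  have hTH : ∀ i j, ‖Tᴴ i j‖ = ‖T j i‖ := by
    intro i j; rw [Matrix.conjTranspose_apply, norm_star]
  have rowS : ∀ i, ∑ j, ‖R i j‖ * ‖T j i‖ ≤ 1 := by
    intro i
    refine cs_le_one (fun j => norm_nonneg _) (fun j => norm_nonneg _) ?_ ?_
    · have := col_bound hR' i
      simpa only [hRH] using this
    · exact col_bound hT i
  have colS : ∀ j, ∑ i, ‖R i j‖ * ‖T j i‖ ≤ 1 := by
    intro j
    refine cs_le_one (fun i => norm_nonneg _) (fun i => norm_nonneg _) ?_ ?_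
    · exact col_bound hR j
    · have := col_bound hT' j
      simpa only [hTH] using this
  calc ‖∑ i, ∑ j, R i j * x j * T j i * y i‖
      ≤ ∑ i, ∑ j, (‖R i j‖ * ‖T j i‖) * (u j ^ μ * v i ^ (1-μ)) := by
        refine (norm_sum_le _ _).trans (Finset.sum_le_sum fun i _ => ?_)
        refine (norm_sum_le _ _).trans (Finset.sum_le_sum fun j _ => ?_)
        rw [norm_mul, norm_mul, norm_mul]
        calc ‖R i j‖ * ‖x j‖ * ‖T j i‖ * ‖y i‖
            ≤ ‖R i j‖ * (u j ^ μ) * ‖T j i‖ * (v i ^ (1-μ)) := by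
              gcongr
              all_goals first
                | exact hx j
                | exact hy i
                | exact mul_nonneg (mul_nonneg (norm_nonneg _)
                    (Real.rpow_nonneg (hu j) _)) (norm_nonneg _)
                | positivity
          _ = (‖R i j‖ * ‖T j i‖) * (u j ^ μ * v i ^ (1-μ)) := by ring
    _ ≤ _ := sum_bound (fun i j => mul_nonneg (norm_nonneg _) (norm_nonneg _))
        rowS colS hu hv hμ0 hμ1

lemma rpow_le_max {a e E : ℝ} (ha : 0 ≤ a) (h0 : 0 ≤ e) (h1 : e ≤ E) :
    a ^ e ≤ max 1 (a ^ E) := by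
  rcases le_or_gt a 1 with h | h
  · exact le_max_of_le_left (Real.rpow_le_one ha h h0)
  · exact le_max_of_le_right (Real.rpow_le_rpow_of_exponent_le h.le h1)

lemma trace_cyc (M N P : Matrix (Fin d) (Fin d) ℂ) (x y w : Fin d → ℂ) :
    (M * diagonal x * N * diagonal y * P * diagonal w).trace
      = (P * diagonal w * M * diagonal x * N * diagonal y).trace := by
  rw [mul_assoc (M * diagonal x * N * diagonal y) P (diagonal w), Matrix.trace_mul_comm]
  congr 1
  simp only [mul_assoc]

lemma core {M N P : Matrix (Fin d) (Fin d) ℂ}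
    (hM : con M) (hN : con N) (hP : con P)
    {a b c : Fin d → ℝ} (ha : ∀ i, 0 ≤ a i) (hb : ∀ i, 0 ≤ b i) (hc : ∀ i, 0 ≤ c i)
    {r s t : ℝ} (hr : 0 < r) (hs : 0 < s) (ht : 0 < t)
    (hrst : 1/r + 1/s + 1/t = 1) :
    ‖(M * diagonal (fun j => (a j:ℂ)) * N * diagonal (fun k => (b k:ℂ)) * P
        * diagonal (fun i => (c i:ℂ))).trace‖
      ≤ (∑ j, a j ^ r) ^ (1/r) * (∑ k, b k ^ s) ^ (1/s) * (∑ i, c i ^ t) ^ (1/t) := by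
  -- notation
  set A' : ℝ := ∑ j, a j ^ r with hA'
  set B' : ℝ := ∑ k, b k ^ s with hB'
  set C' : ℝ := ∑ i, c i ^ t with hC'
  have hA'nn : 0 ≤ A' := Finset.sum_nonneg fun j _ => Real.rpow_nonneg (ha j) _
  have hB'nn : 0 ≤ B' := Finset.sum_nonneg fun k _ => Real.rpow_nonneg (hb k) _
  have hC'nn : 0 ≤ C' := Finset.sum_nonneg fun i _ => Real.rpow_nonneg (hc i) _
  -- degenerate cases
  have degen : ∀ (v : Fin d → ℝ) (p : ℝ), 0 < p → (∀ i, 0 ≤ v i) →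
      (∑ i, v i ^ p) = 0 → ∀ i, v i = 0 := by
    intro v p hp hv hsum i
    have h0 : v i ^ p = 0 :=
      (Finset.sum_eq_zero_iff_of_nonneg
        (fun i _ => Real.rpow_nonneg (hv i) _)).mp hsum i (Finset.mem_univ i)
    by_contra hne
    exact hne (by
      have := Real.rpow_eq_zero_iff_of_nonneg (hv i) |>.mp h0
      exact this.1)
  by_cases hAz : A' = 0
  · have hz : ∀ j, a j = 0 := degen a r hr ha hAz
    have hdiag : (diagonal (fun j => ((a j : ℝ):ℂ))) = 0 := by
      have : (fun j => ((a j : ℝ):ℂ)) = fun _ => 0 := funext fun j => by rw [hz j]; simp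
      rw [this, diagonal_zero]
    rw [hdiag]
    simp only [Matrix.mul_zero, Matrix.zero_mul, Matrix.trace_zero, norm_zero]
    rw [hAz, Real.zero_rpow (by positivity : (1:ℝ)/r ≠ 0)]
    positivity
  by_cases hBz : B' = 0
  · have hz : ∀ k, b k = 0 := degen b s hs hb hBz
    have hdiag : (diagonal (fun k => ((b k : ℝ):ℂ))) = 0 := by
      have : (fun k => ((b k : ℝ):ℂ)) = fun _ => 0 := funext fun k => by rw [hz k]; simp
      rw [this, diagonal_zero]
    rw [hdiag]
    simp only [Matrix.mul_zero, Matrix.zero_mul, Matrix.trace_zero, norm_zero]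
    rw [hBz, Real.zero_rpow (by positivity : (1:ℝ)/s ≠ 0)]
    positivity
  by_cases hCz : C' = 0
  · have hz : ∀ i, c i = 0 := degen c t ht hc hCz
    have hdiag : (diagonal (fun i => ((c i : ℝ):ℂ))) = 0 := by
      have : (fun i => ((c i : ℝ):ℂ)) = fun _ => 0 := funext fun i => by rw [hz i]; simp
      rw [this, diagonal_zero]
    rw [hdiag]
    simp only [Matrix.mul_zero, Matrix.zero_mul, Matrix.trace_zero, norm_zero]
    rw [hCz, Real.zero_rpow (by positivity : (1:ℝ)/t ≠ 0)]
    positivity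
  have hA'pos : 0 < A' := lt_of_le_of_ne hA'nn (Ne.symm hAz)
  have hB'pos : 0 < B' := lt_of_le_of_ne hB'nn (Ne.symm hBz)
  have hC'pos : 0 < C' := lt_of_le_of_ne hC'nn (Ne.symm hCz)
  -- exponent bookkeeping
  obtain ⟨x, hxdef⟩ : ∃ x:ℝ, x = 1/r + 1/t := ⟨_, rfl⟩
  have hx0 : 0 < x := by rw [hxdef]; positivity
  have hxs : 1 - x = 1/s := by rw [hxdef]; linarith
  have hx1 : x < 1 := by
    have h1s : 0 < 1/s := by positivity
    linarith
  obtain ⟨θ, hθdef⟩ : ∃ θ:ℝ, θ = (1/r)/x := ⟨_, rfl⟩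
  have hθ0 : 0 < θ := by rw [hθdef]; positivity
  have hθ1 : θ < 1 := by
    rw [hθdef, div_lt_one hx0, hxdef]
    have h1t : 0 < 1/t := by positivity
    linarith
  have e1 : x * θ = 1/r := by
    rw [hθdef]
    field_simp
  have exθ : r * x * θ = 1 := by
    rw [show r*x*θ = r*(x*θ) by ring, e1]
    field_simp
  have exb : s * (1 - x) = 1 := by
    rw [hxs]
    field_simp
  have e3 : x * (1 - θ) = 1/t := by
    rw [mul_sub, mul_one, e1, hxdef]
    ring
  have exγ : t * x * (1 - θ) = 1 := by
    rw [show t*x*(1-θ) = t*(x*(1-θ)) by ring, e3]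
    field_simp
  -- the interpolating function
  set F : ℂ → ℂ := fun z =>
    (M * diagonal (fun j => cpw (a j) (((r*x : ℝ):ℂ) * z)) * N
       * diagonal (fun k => ((b k ^ (s*(1-x)) : ℝ) : ℂ)) * P
       * diagonal (fun i => cpw (c i) (((t*x : ℝ):ℂ) * (1 - z)))).trace with hFdef
  -- value at θ
  have hFθ : F (θ:ℂ) = (M * diagonal (fun j => (a j:ℂ)) * N * diagonal (fun k => (b k:ℂ)) * P
      * diagonal (fun i => (c i:ℂ))).trace := by
    have h1 : (fun j => cpw (a j) (((r*x : ℝ):ℂ) * (θ:ℂ))) = fun j => ((a j : ℝ):ℂ) := by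
      funext j
      rw [← Complex.ofReal_mul, show r*x*θ = 1 from exθ, Complex.ofReal_one, cpw_one (ha j)]
    have h2 : (fun k => ((b k ^ (s*(1-x)) : ℝ) : ℂ)) = fun k => ((b k : ℝ):ℂ) := by
      funext k
      rw [exb, Real.rpow_one]
    have h3 : (fun i => cpw (c i) (((t*x : ℝ):ℂ) * (1 - (θ:ℂ)))) = fun i => ((c i : ℝ):ℂ) := by
      funext i
      rw [show (1:ℂ) - (θ:ℂ) = ((1 - θ : ℝ):ℂ) by push_cast; ring,
        ← Complex.ofReal_mul, show t*x*(1-θ) = 1 from exγ, Complex.ofReal_one, cpw_one (hc i)]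
    simp only [hFdef, h1, h2, h3]
  -- sum formula for F
  have hFsum : F = fun z => ∑ i, ∑ j, ∑ k,
      M i j * cpw (a j) (((r*x:ℝ):ℂ) * z) * N j k * ((b k ^ (s*(1-x)) : ℝ) : ℂ)
        * P k i * cpw (c i) (((t*x:ℝ):ℂ) * (1 - z)) := by
    funext z
    simp only [hFdef]
    exact trace3 _ _ _ _ _ _
  have hdiff : Differentiable ℂ F := by
    rw [hFsum]
    refine Differentiable.fun_sum fun i _ => Differentiable.fun_sum fun j _ =>
      Differentiable.fun_sum fun k _ => ?_
    have g1 : Differentiable ℂ (fun z : ℂ => ((r*x:ℝ):ℂ) * z) :=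
      differentiable_id.const_mul _
    have g2 : Differentiable ℂ (fun z : ℂ => ((t*x:ℝ):ℂ) * (1 - z)) :=
      ((differentiable_const _).sub differentiable_id).const_mul _
    exact (((((differentiable_const _).mul (cpw_differentiable _ g1)).mul
      (differentiable_const _)).mul (differentiable_const _)).mul
      (differentiable_const _)).mul (cpw_differentiable _ g2)
  have hrx : (0:ℝ) ≤ r * x := by positivity
  have htx : (0:ℝ) ≤ t * x := by positivity
  -- boundedness on the strip
  have hbound : ∀ z : ℂ, z.re ∈ Set.Icc (0:ℝ) 1 → ‖F z‖ ≤
      ∑ i, ∑ j, ∑ k : Fin d,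
        (max 1 (a j ^ (r*x))) * (b k ^ (s*(1-x))) * (max 1 (c i ^ (t*x))) := by
    intro z hz
    rw [hFsum]
    refine (norm_sum_le _ _).trans (Finset.sum_le_sum fun i _ => ?_)
    refine (norm_sum_le _ _).trans (Finset.sum_le_sum fun j _ => ?_)
    refine (norm_sum_le _ _).trans (Finset.sum_le_sum fun k _ => ?_)
    simp only [norm_mul]
    have b1 : ‖cpw (a j) (((r*x:ℝ):ℂ) * z)‖ ≤ max 1 (a j ^ (r*x)) := by
      refine (norm_cpw_le (ha j) _).trans ?_
      rw [Complex.re_ofReal_mul]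
      exact rpow_le_max (ha j) (mul_nonneg hrx hz.1) (mul_le_of_le_one_right hrx hz.2)
    have b2 : ‖((b k ^ (s*(1-x)) : ℝ) : ℂ)‖ = b k ^ (s*(1-x)) := by
      rw [Complex.norm_real, Real.norm_eq_abs, abs_of_nonneg (Real.rpow_nonneg (hb k) _)]
    have b3 : ‖cpw (c i) (((t*x:ℝ):ℂ) * (1 - z))‖ ≤ max 1 (c i ^ (t*x)) := by
      refine (norm_cpw_le (hc i) _).trans ?_
      rw [Complex.re_ofReal_mul, Complex.sub_re, Complex.one_re]
      refine rpow_le_max (hc i) (mul_nonneg htx (by linarith [hz.2])) ?_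
      exact mul_le_of_le_one_right htx (by linarith [hz.1])
    have hmax1 : (0:ℝ) ≤ max 1 (a j ^ (r*x)) := le_trans zero_le_one (le_max_left _ _)
    calc ‖M i j‖ * ‖cpw (a j) (((r*x:ℝ):ℂ) * z)‖ * ‖N j k‖ * ‖((b k ^ (s*(1-x)) : ℝ) : ℂ)‖
          * ‖P k i‖ * ‖cpw (c i) (((t*x:ℝ):ℂ) * (1 - z))‖
        ≤ 1 * (max 1 (a j ^ (r*x))) * 1 * (b k ^ (s*(1-x))) * 1
            * (max 1 (c i ^ (t*x))) := by
          have hb2 : (0:ℝ) ≤ b k ^ (s*(1-x)) := Real.rpow_nonneg (hb k) _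
          gcongr
          all_goals first
            | exact entry_bound hM i j
            | exact entry_bound hN j k
            | exact entry_bound hP k i
            | exact b1
            | exact le_of_eq b2
            | exact b3
            | exact mul_nonneg (mul_nonneg (mul_nonneg (mul_nonneg zero_le_one hmax1)
                zero_le_one) hb2) zero_le_one
            | exact mul_nonneg (mul_nonneg (mul_nonneg zero_le_one hmax1) zero_le_one) hb2
            | positivity
      _ = (max 1 (a j ^ (r*x))) * (b k ^ (s*(1-x))) * (max 1 (c i ^ (t*x))) := by ring
  have hBdd : BddAbove ((norm ∘ F) ''
      Complex.HadamardThreeLines.verticalClosedStrip 0 1) := by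
    refine ⟨∑ i, ∑ j, ∑ k : Fin d,
      (max 1 (a j ^ (r*x))) * (b k ^ (s*(1-x))) * (max 1 (c i ^ (t*x))), ?_⟩
    rintro w ⟨z, hz, rfl⟩
    exact hbound z hz
  -- boundary estimate at Re z = 0
  have hbd0 : ∀ z ∈ Complex.re ⁻¹' {(0:ℝ)}, ‖F z‖ ≤ B' ^ (1-x) * C' ^ x := by
    intro z hz
    have hzre : z.re = 0 := hz
    have hconD : con (diagonal (fun j => cpw (a j) (((r*x:ℝ):ℂ) * z))) := by
      refine con_diagonal fun j => ?_
      refine (norm_cpw_le (ha j) _).trans ?_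
      rw [Complex.re_ofReal_mul, hzre, mul_zero, Real.rpow_zero]
    have hconR : con (M * diagonal (fun j => cpw (a j) (((r*x:ℝ):ℂ) * z)) * N) :=
      con_mul (con_mul hM hconD) hN
    have happ := bilinear hconR (con_conjTranspose hconR) hP (con_conjTranspose hP)
      (u := fun k => b k ^ s) (v := fun i => c i ^ t)
      (fun k => Real.rpow_nonneg (hb k) _) (fun i => Real.rpow_nonneg (hc i) _)
      (μ := 1-x) (by linarith) (by linarith)
      (x := fun k => ((b k ^ (s*(1-x)) : ℝ) : ℂ))
      (y := fun i => cpw (c i) (((t*x:ℝ):ℂ) * (1 - z)))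
      (fun k => by
        show ‖((b k ^ (s*(1-x)) : ℝ) : ℂ)‖ ≤ (b k ^ s) ^ (1-x)
        rw [Complex.norm_real, Real.norm_eq_abs, abs_of_nonneg (Real.rpow_nonneg (hb k) _),
          ← Real.rpow_mul (hb k)])
      (fun i => by
        show ‖cpw (c i) (((t*x:ℝ):ℂ) * (1 - z))‖ ≤ (c i ^ t) ^ (1-(1-x))
        rw [sub_sub_cancel]
        refine (norm_cpw_le (hc i) _).trans (le_of_eq ?_)
        rw [Complex.re_ofReal_mul, Complex.sub_re, Complex.one_re, hzre, sub_zero, mul_one,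
          Real.rpow_mul (hc i)])
    rw [sub_sub_cancel] at happ
    simp only [hFdef]
    rw [hB', hC']
    exact happ
  -- boundary estimate at Re z = 1
  have hbd1 : ∀ z ∈ Complex.re ⁻¹' {(1:ℝ)}, ‖F z‖ ≤ A' ^ x * B' ^ (1-x) := by
    intro z hz
    have hzre : z.re = 1 := hz
    have hconD : con (diagonal (fun i => cpw (c i) (((t*x:ℝ):ℂ) * (1 - z)))) := by
      refine con_diagonal fun i => ?_
      refine (norm_cpw_le (hc i) _).trans ?_
      rw [Complex.re_ofReal_mul, Complex.sub_re, Complex.one_re, hzre, sub_self, mul_zero,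
        Real.rpow_zero]
    have hconR : con (P * diagonal (fun i => cpw (c i) (((t*x:ℝ):ℂ) * (1 - z))) * M) :=
      con_mul (con_mul hP hconD) hM
    have happ := bilinear hconR (con_conjTranspose hconR) hN (con_conjTranspose hN)
      (u := fun j => a j ^ r) (v := fun k => b k ^ s)
      (fun j => Real.rpow_nonneg (ha j) _) (fun k => Real.rpow_nonneg (hb k) _)
      (μ := x) hx0.le hx1.le
      (x := fun j => cpw (a j) (((r*x:ℝ):ℂ) * z))
      (y := fun k => ((b k ^ (s*(1-x)) : ℝ) : ℂ))
      (fun j => by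
        show ‖cpw (a j) (((r*x:ℝ):ℂ) * z)‖ ≤ (a j ^ r) ^ x
        refine (norm_cpw_le (ha j) _).trans (le_of_eq ?_)
        rw [Complex.re_ofReal_mul, hzre, mul_one, Real.rpow_mul (ha j)])
      (fun k => by
        show ‖((b k ^ (s*(1-x)) : ℝ) : ℂ)‖ ≤ (b k ^ s) ^ (1-x)
        rw [Complex.norm_real, Real.norm_eq_abs, abs_of_nonneg (Real.rpow_nonneg (hb k) _),
          ← Real.rpow_mul (hb k)])
    simp only [hFdef]
    rw [trace_cyc, hA', hB']
    exact happ
  -- Hadamard three lines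
  have hmem : (θ:ℂ) ∈ Complex.HadamardThreeLines.verticalClosedStrip 0 1 := by
    simp only [Complex.HadamardThreeLines.verticalClosedStrip, Set.mem_preimage,
      Complex.ofReal_re, Set.mem_Icc]
    exact ⟨hθ0.le, hθ1.le⟩
  have hHad := Complex.HadamardThreeLines.norm_le_interp_of_mem_verticalClosedStrip' (f := F) zero_lt_one
    hmem (hdiff.diffContOnCl) hBdd hbd0 hbd1
  rw [hFθ, Complex.ofReal_re] at hHad
  simp only [sub_zero, div_one] at hHad
  refine hHad.trans (le_of_eq ?_)
  rw [Real.mul_rpow (Real.rpow_nonneg hB'nn _) (Real.rpow_nonneg hC'nn _),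
    Real.mul_rpow (Real.rpow_nonneg hA'nn _) (Real.rpow_nonneg hB'nn _),
    ← Real.rpow_mul hB'nn, ← Real.rpow_mul hC'nn, ← Real.rpow_mul hA'nn,
    ← Real.rpow_mul hB'nn]
  rw [show B' ^ ((1-x)*(1-θ)) * C' ^ (x*(1-θ)) * (A' ^ (x*θ) * B' ^ ((1-x)*θ))
      = A' ^ (x*θ) * (B' ^ ((1-x)*(1-θ)) * B' ^ ((1-x)*θ)) * C' ^ (x*(1-θ)) by ring]
  rw [← Real.rpow_add hB'pos, e1, e3,
    show (1-x)*(1-θ) + (1-x)*θ = 1/s by rw [← hxs]; ring]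

variable (X : Matrix (Fin d) (Fin d) ℂ)

open scoped MatrixOrder in
lemma matAbs_eq_sqrt : matAbs X = CFC.sqrt (Xᴴ * X) := by
  have h0 : (0 : Matrix (Fin d) (Fin d) ℂ) ≤ Xᴴ * X :=
    Matrix.nonneg_iff_posSemidef.mpr (posSemidef_conjTranspose_mul_self X)
  rw [CFC.sqrt_eq_real_sqrt _ h0, cfcₙ_eq_cfc, (posSemidef_conjTranspose_mul_self X).1.cfc_eq]
  rfl

open scoped MatrixOrder in
lemma absPSD : (matAbs X).PosSemidef := by
  rw [matAbs_eq_sqrt]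
  exact Matrix.nonneg_iff_posSemidef.mp (CFC.sqrt_nonneg _)

/-- singular values -/
def sv : Fin d → ℝ := (absPSD X).1.eigenvalues

def evU : Matrix (Fin d) (Fin d) ℂ :=
  ((absPSD X).1.eigenvectorUnitary : Matrix (Fin d) (Fin d) ℂ)

lemma sv_nonneg : ∀ i, 0 ≤ sv X i := (absPSD X).eigenvalues_nonneg

lemma evU_mem : evU X ∈ Matrix.unitaryGroup (Fin d) ℂ :=
  ((absPSD X).1.eigenvectorUnitary).2

lemma evU_star_self : (evU X)ᴴ * evU X = 1 := by
  rw [← Matrix.star_eq_conjTranspose]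
  exact Matrix.mem_unitaryGroup_iff'.mp (evU_mem X)

lemma evU_self_star : evU X * (evU X)ᴴ = 1 := by
  rw [← Matrix.star_eq_conjTranspose]
  exact Matrix.mem_unitaryGroup_iff.mp (evU_mem X)

lemma spec : matAbs X = evU X * diagonal (fun i => (sv X i : ℂ)) * (evU X)ᴴ := by
  have h := (absPSD X).1.spectral_theorem
  rw [← Matrix.star_eq_conjTranspose]
  exact h

open scoped MatrixOrder in
lemma abs_mul_abs : matAbs X * matAbs X = Xᴴ * X := by
  rw [matAbs_eq_sqrt]
  exact CFC.sqrt_mul_sqrt_self _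
    (Matrix.nonneg_iff_posSemidef.mpr (posSemidef_conjTranspose_mul_self X))

/-- Gram matrix of X * evU X is diagonal -/
lemma gram_eq : (X * evU X)ᴴ * (X * evU X)
    = diagonal (fun i => ((sv X i : ℂ) * (sv X i : ℂ))) := by
  rw [Matrix.conjTranspose_mul]
  calc (evU X)ᴴ * Xᴴ * (X * evU X) = (evU X)ᴴ * (Xᴴ * X) * evU X := by
        simp only [mul_assoc]
    _ = (evU X)ᴴ * (matAbs X * matAbs X) * evU X := by rw [abs_mul_abs]
    _ = diagonal (fun i => ((sv X i : ℂ) * (sv X i : ℂ))) := by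
        rw [spec X]
        calc (evU X)ᴴ * (evU X * diagonal (fun i => (sv X i : ℂ)) * (evU X)ᴴ
              * (evU X * diagonal (fun i => (sv X i : ℂ)) * (evU X)ᴴ)) * evU X
            = ((evU X)ᴴ * evU X) * diagonal (fun i => (sv X i : ℂ)) * ((evU X)ᴴ * evU X)
              * diagonal (fun i => (sv X i : ℂ)) * ((evU X)ᴴ * evU X) := by
              simp only [mul_assoc]
          _ = diagonal (fun i => (sv X i : ℂ)) * diagonal (fun i => (sv X i : ℂ)) := by
              rw [evU_star_self]; simp
          _ = _ := by
              rw [Matrix.diagonal_mul_diagonal]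

lemma norm_sq_col (K : Matrix (Fin d) (Fin d) ℂ) (j : Fin d) :
    ((Kᴴ * K) j j).re = ∑ i, ‖K i j‖^2 := by
  rw [Matrix.mul_apply, Complex.re_sum]
  refine Finset.sum_congr rfl fun i _ => ?_
  rw [Matrix.conjTranspose_apply]
  have : (star (K i j)) * K i j = ((Complex.normSq (K i j) : ℝ) : ℂ) := by
    rw [RCLike.star_def, mul_comm, Complex.mul_conj]
  rw [this, Complex.ofReal_re, Complex.normSq_eq_norm_sq]

lemma col_zero {j : Fin d} (hj : sv X j = 0) : ∀ i, (X * evU X) i j = 0 := by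
  intro i
  have h := norm_sq_col (X * evU X) j
  rw [gram_eq X, Matrix.diagonal_apply_eq, hj] at h
  simp only [Complex.ofReal_zero, zero_mul, Complex.zero_re] at h
  have h2 : ∀ i ∈ Finset.univ, (0:ℝ) ≤ ‖(X * evU X) i j‖^2 := fun i _ => sq_nonneg _
  have h3 := (Finset.sum_eq_zero_iff_of_nonneg h2).mp h.symm i (Finset.mem_univ i)
  have := sq_eq_zero_iff.mp h3
  simpa using this

lemma con_of_gram_diag {K : Matrix (Fin d) (Fin d) ℂ} {g : Fin d → ℝ}
    (hKK : Kᴴ * K = diagonal (fun i => (g i : ℂ))) (hg : ∀ i, g i ≤ 1) : con K := by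
  intro x
  have key : star (K *ᵥ x) ⬝ᵥ (K *ᵥ x) = star x ⬝ᵥ ((Kᴴ * K) *ᵥ x) := by
    rw [Matrix.star_mulVec, Matrix.dotProduct_mulVec, Matrix.vecMul_vecMul,
      ← Matrix.dotProduct_mulVec]
  rw [n2sq_eq_re, key, hKK]
  have hdot : (star x ⬝ᵥ (diagonal (fun i => (g i : ℂ)) *ᵥ x)).re
      = ∑ i, g i * ‖x i‖^2 := by
    rw [dotProduct, Complex.re_sum]
    refine Finset.sum_congr rfl fun i _ => ?_
    rw [Matrix.mulVec_diagonal]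
    have : (star x i) * ((g i : ℂ) * x i) = (g i : ℂ) * ((star (x i)) * x i) := by
      simp [Pi.star_apply]; ring
    rw [this]
    have h2 : (star (x i)) * x i = ((Complex.normSq (x i) : ℝ) : ℂ) := by
      rw [RCLike.star_def, mul_comm, Complex.mul_conj]
    rw [h2, ← Complex.ofReal_mul, Complex.ofReal_re, Complex.normSq_eq_norm_sq]
  rw [hdot]
  unfold n2sq
  refine Finset.sum_le_sum fun i _ => ?_
  exact mul_le_of_le_one_left (sq_nonneg _) (hg i)

/-- pseudo-inverse of singular values -/
def pinv : Fin d → ℝ := fun i => if sv X i = 0 then 0 else (sv X i)⁻¹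

def polarU : Matrix (Fin d) (Fin d) ℂ :=
  X * evU X * diagonal (fun i => (pinv X i : ℂ)) * (evU X)ᴴ

lemma KD_eq_K : X * evU X * diagonal (fun i => (pinv X i : ℂ) * (sv X i : ℂ))
    = X * evU X := by
  ext i j
  rw [Matrix.mul_diagonal]
  by_cases hj : sv X j = 0
  · rw [col_zero X hj i]; ring
  · rw [show pinv X j = (sv X j)⁻¹ from if_neg hj]
    rw [← Complex.ofReal_mul, inv_mul_cancel₀ hj, Complex.ofReal_one, mul_one]

lemma polarU_mul_abs : polarU X * matAbs X = X := by
  rw [polarU, spec X]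
  calc X * evU X * diagonal (fun i => (pinv X i : ℂ)) * (evU X)ᴴ
        * (evU X * diagonal (fun i => (sv X i : ℂ)) * (evU X)ᴴ)
      = X * evU X * (diagonal (fun i => (pinv X i : ℂ)) * ((evU X)ᴴ * evU X)
          * diagonal (fun i => (sv X i : ℂ))) * (evU X)ᴴ := by
        simp only [mul_assoc]
    _ = X * evU X * diagonal (fun i => (pinv X i : ℂ) * (sv X i : ℂ)) * (evU X)ᴴ := by
        rw [evU_star_self]
        simp [Matrix.diagonal_mul_diagonal]
    _ = X * (evU X * (evU X)ᴴ) := by rw [KD_eq_K]; simp only [mul_assoc]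
    _ = X := by rw [evU_self_star, mul_one]

lemma polarU_star_mul : (polarU X)ᴴ * X = matAbs X := by
  have habs : Xᴴ * X = matAbs X * matAbs X := (abs_mul_abs X).symm
  rw [polarU]
  simp only [Matrix.conjTranspose_mul, Matrix.conjTranspose_conjTranspose,
    Matrix.diagonal_conjTranspose]
  have hstar : (star fun i => (pinv X i : ℂ)) = fun i => (pinv X i : ℂ) := by
    funext i; simp [Pi.star_apply, Complex.conj_ofReal]
  rw [hstar]
  simp only [← mul_assoc]
  calc evU X * diagonal (fun i => (pinv X i : ℂ)) * (evU X)ᴴ * Xᴴ * X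
      = evU X * diagonal (fun i => (pinv X i : ℂ)) * (evU X)ᴴ
        * (matAbs X * matAbs X) := by
        rw [mul_assoc _ Xᴴ X, habs]
    _ = matAbs X := by
        rw [spec X]
        calc evU X * diagonal (fun i => (pinv X i : ℂ)) * (evU X)ᴴ
              * (evU X * diagonal (fun i => (sv X i : ℂ)) * (evU X)ᴴ
                * (evU X * diagonal (fun i => (sv X i : ℂ)) * (evU X)ᴴ))
            = evU X * (diagonal (fun i => (pinv X i : ℂ)) * ((evU X)ᴴ * evU X)
                * diagonal (fun i => (sv X i : ℂ)) * ((evU X)ᴴ * evU X)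
                * diagonal (fun i => (sv X i : ℂ))) * (evU X)ᴴ := by
              simp only [mul_assoc]
          _ = evU X * (diagonal (fun i => (pinv X i : ℂ) * (sv X i : ℂ) * (sv X i : ℂ)))
              * (evU X)ᴴ := by
              rw [evU_star_self]
              simp [Matrix.diagonal_mul_diagonal]
          _ = evU X * diagonal (fun i => (sv X i : ℂ)) * (evU X)ᴴ := by
              have heq : (fun i => (pinv X i : ℂ) * (sv X i : ℂ) * (sv X i : ℂ))
                  = fun i => (sv X i : ℂ) := by
                funext i
                by_cases hi : sv X i = 0
                · rw [hi]; simp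
                · rw [show pinv X i = (sv X i)⁻¹ from if_neg hi]
                  have hne : (sv X i : ℂ) ≠ 0 := Complex.ofReal_ne_zero.mpr hi
                  push_cast
                  field_simp
              rw [heq]

lemma con_polarU : con (polarU X) := by
  have hKD : con (X * evU X * diagonal (fun i => (pinv X i : ℂ))) := by
    refine con_of_gram_diag (g := fun i => (pinv X i * sv X i) * (pinv X i * sv X i)) ?_ ?_
    · simp only [Matrix.conjTranspose_mul, Matrix.diagonal_conjTranspose]
      have hstar : (star fun i => (pinv X i : ℂ)) = fun i => (pinv X i : ℂ) := by
        funext i; simp [Pi.star_apply, Complex.conj_ofReal]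
      rw [hstar]
      calc diagonal (fun i => (pinv X i : ℂ)) * ((evU X)ᴴ * Xᴴ)
            * (X * evU X * diagonal (fun i => (pinv X i : ℂ)))
          = diagonal (fun i => (pinv X i : ℂ)) * ((X * evU X)ᴴ * (X * evU X))
            * diagonal (fun i => (pinv X i : ℂ)) := by
            rw [Matrix.conjTranspose_mul]
            simp only [mul_assoc]
        _ = diagonal (fun i => (pinv X i : ℂ)) * diagonal
              (fun i => ((sv X i : ℂ) * (sv X i : ℂ)))
            * diagonal (fun i => (pinv X i : ℂ)) := by rw [gram_eq]
        _ = diagonal (fun i => (((pinv X i * sv X i) * (pinv X i * sv X i) : ℝ) : ℂ)) := by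
            rw [Matrix.diagonal_mul_diagonal, Matrix.diagonal_mul_diagonal]
            refine congrArg diagonal (funext fun i => ?_)
            push_cast
            ring
    · intro i
      show pinv X i * sv X i * (pinv X i * sv X i) ≤ 1
      by_cases hi : sv X i = 0
      · simp [pinv, hi]
      · rw [show pinv X i = (sv X i)⁻¹ from if_neg hi, inv_mul_cancel₀ hi]
        norm_num
  exact con_mul hKD (con_conjTranspose (con_of_unitary (evU_mem X)))

open scoped MatrixOrder in
lemma traceNorm_rpow (p : ℝ) :
    traceNorm (matRpow p (matAbs X)) = ∑ i, sv X i ^ p := by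
  have h1 : (matAbs X).IsHermitian := (absPSD X).1
  have hcfc : matRpow p (matAbs X)
      = evU X * diagonal (fun i => ((sv X i ^ p : ℝ) : ℂ)) * (evU X)ᴴ := by
    rw [matRpow, hermCFC, dif_pos h1]
    rw [Matrix.IsHermitian.cfc]
    rw [← Matrix.star_eq_conjTranspose]
    rfl
  set Y := evU X * diagonal (fun i => ((sv X i ^ p : ℝ) : ℂ)) * (evU X)ᴴ with hY
  have hYpsd : Y.PosSemidef := by
    have hdiag : (diagonal (fun i => ((sv X i ^ p : ℝ) : ℂ))).PosSemidef := by
      rw [Matrix.posSemidef_diagonal_iff]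
      intro i
      rw [Complex.zero_le_real]
      exact Real.rpow_nonneg (sv_nonneg X i) _
    have := hdiag.mul_mul_conjTranspose_same (evU X)
    rwa [hY]
  have habsY : matAbs Y = Y := by
    have hsq : Y ^ 2 = Yᴴ * Y := by
      rw [pow_two]
      nth_rewrite 1 [← hYpsd.1]
      rfl
    rw [matAbs_eq_sqrt, ← hsq, pow_two]
    exact CFC.sqrt_mul_self _ (Matrix.nonneg_iff_posSemidef.mpr hYpsd)
  rw [hcfc, traceNorm, habsY, hY]
  rw [Matrix.trace_mul_cycle, evU_star_self, one_mul, Matrix.trace_diagonal]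
  rw [Complex.re_sum]
  refine Finset.sum_congr rfl fun i _ => by rw [Complex.ofReal_re]


lemma shuffle (V pA WA pB WB pC WC : Matrix (Fin d) (Fin d) ℂ)
    (da db dc : Fin d → ℂ) :
    (V * (pA * (WA * diagonal da * WAᴴ) * (pB * (WB * diagonal db * WBᴴ))
        * (pC * (WC * diagonal dc * WCᴴ)))).trace
      = (WCᴴ * V * pA * WA * diagonal da * (WAᴴ * pB * WB) * diagonal db
          * (WBᴴ * pC * WC) * diagonal dc).trace := by
  calc (V * (pA * (WA * diagonal da * WAᴴ) * (pB * (WB * diagonal db * WBᴴ))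
        * (pC * (WC * diagonal dc * WCᴴ)))).trace
      = ((V * pA * WA * diagonal da * WAᴴ * pB * WB * diagonal db * WBᴴ * pC * WC
          * diagonal dc) * WCᴴ).trace := by
        congr 1
        simp only [mul_assoc]
    _ = (WCᴴ * (V * pA * WA * diagonal da * WAᴴ * pB * WB * diagonal db * WBᴴ * pC * WC
          * diagonal dc)).trace := Matrix.trace_mul_comm _ _
    _ = _ := by
        congr 1
        simp only [mul_assoc]


end TNH

/-- Hölder inequality for three operators in trace norm: for `r, s, t > 0` with
`1/r + 1/s + 1/t = 1`, `‖ABC‖₁ ≤ (‖|A|^r‖₁)^{1/r} (‖|B|^s‖₁)^{1/s} (‖|C|^t‖₁)^{1/t}`. -/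
theorem traceNorm_hoelder_three {d : ℕ} (A B C : Matrix (Fin d) (Fin d) ℂ)
    (r s t : ℝ) (hr : 0 < r) (hs : 0 < s) (ht : 0 < t)
    (hrst : 1 / r + 1 / s + 1 / t = 1) :
    traceNorm (A * B * C) ≤
      (traceNorm (matRpow r (matAbs A))) ^ (1 / r) *
        (traceNorm (matRpow s (matAbs B))) ^ (1 / s) *
          (traceNorm (matRpow t (matAbs C))) ^ (1 / t) := by
  open TNH in
  rw [TNH.traceNorm_rpow A r, TNH.traceNorm_rpow B s, TNH.traceNorm_rpow C t]
  obtain ⟨V, hV⟩ : ∃ V, V = (TNH.polarU (A*B*C))ᴴ := ⟨_, rfl⟩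
  have hconV : TNH.con V := hV ▸ TNH.con_conjTranspose (TNH.con_polarU (A*B*C))
  have hA : A = TNH.polarU A
      * (TNH.evU A * diagonal (fun i => (TNH.sv A i : ℂ)) * (TNH.evU A)ᴴ) := by
    rw [← TNH.spec A, TNH.polarU_mul_abs]
  have hB : B = TNH.polarU B
      * (TNH.evU B * diagonal (fun i => (TNH.sv B i : ℂ)) * (TNH.evU B)ᴴ) := by
    rw [← TNH.spec B, TNH.polarU_mul_abs]
  have hC : C = TNH.polarU C
      * (TNH.evU C * diagonal (fun i => (TNH.sv C i : ℂ)) * (TNH.evU C)ᴴ) := by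
    rw [← TNH.spec C, TNH.polarU_mul_abs]
  have key : (V * (A * B * C)).trace
      = ((TNH.evU C)ᴴ * V * TNH.polarU A * TNH.evU A
          * diagonal (fun i => (TNH.sv A i : ℂ))
          * ((TNH.evU A)ᴴ * TNH.polarU B * TNH.evU B)
          * diagonal (fun i => (TNH.sv B i : ℂ))
          * ((TNH.evU B)ᴴ * TNH.polarU C * TNH.evU C)
          * diagonal (fun i => (TNH.sv C i : ℂ))).trace := by
    conv_lhs => rw [hA, hB, hC]
    exact TNH.shuffle V (TNH.polarU A) (TNH.evU A) (TNH.polarU B) (TNH.evU B)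
      (TNH.polarU C) (TNH.evU C) _ _ _
  have hM : TNH.con ((TNH.evU C)ᴴ * V * TNH.polarU A * TNH.evU A) :=
    TNH.con_mul (TNH.con_mul (TNH.con_mul
      (TNH.con_conjTranspose (TNH.con_of_unitary (TNH.evU_mem C))) hconV)
      (TNH.con_polarU A)) (TNH.con_of_unitary (TNH.evU_mem A))
  have hN : TNH.con ((TNH.evU A)ᴴ * TNH.polarU B * TNH.evU B) :=
    TNH.con_mul (TNH.con_mul
      (TNH.con_conjTranspose (TNH.con_of_unitary (TNH.evU_mem A)))
      (TNH.con_polarU B)) (TNH.con_of_unitary (TNH.evU_mem B))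
  have hP : TNH.con ((TNH.evU B)ᴴ * TNH.polarU C * TNH.evU C) :=
    TNH.con_mul (TNH.con_mul
      (TNH.con_conjTranspose (TNH.con_of_unitary (TNH.evU_mem B)))
      (TNH.con_polarU C)) (TNH.con_of_unitary (TNH.evU_mem C))
  calc traceNorm (A * B * C)
      = (V * (A * B * C)).trace.re := by
        rw [traceNorm, hV, TNH.polarU_star_mul]
    _ ≤ ‖(V * (A * B * C)).trace‖ := by
        exact Complex.re_le_norm _
    _ = ‖((TNH.evU C)ᴴ * V * TNH.polarU A * TNH.evU A
          * diagonal (fun i => (TNH.sv A i : ℂ))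
          * ((TNH.evU A)ᴴ * TNH.polarU B * TNH.evU B)
          * diagonal (fun i => (TNH.sv B i : ℂ))
          * ((TNH.evU B)ᴴ * TNH.polarU C * TNH.evU C)
          * diagonal (fun i => (TNH.sv C i : ℂ))).trace‖ := by rw [key]
    _ ≤ (∑ j, TNH.sv A j ^ r) ^ (1/r) * (∑ k, TNH.sv B k ^ s) ^ (1/s)
        * (∑ i, TNH.sv C i ^ t) ^ (1/t) :=
      TNH.core hM hN hP (TNH.sv_nonneg A) (TNH.sv_nonneg B) (TNH.sv_nonneg C)
        hr hs ht hrst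

end
end

section
/- Let F be a δ-almost two-universal family of hash functions from 𝒳 to {0,1}^ℓ, let ρ_{XE} = Σ_x |x⟩⟨x| ⊗ ρ_E^{[x]} be a CQ state and τ_E a normalized state on H_E with support containing supp(ρ_E). Let ρ_{FZE} = Σ_{f,z} (1/|F|)|f⟩⟨f| ⊗ |z⟩⟨z| ⊗ Σ_{x: f(x)=z} ρ_E^{[x]} be the post-hashing state. Then Γ_C(ρ_{FZE} | ρ_F ⊗ τ_E) ≤ Γ_C(ρ_{XE} | τ_E) + δ · tr(ρ_E τ_E^{−1/2} ρ_E τ_E^{−1/2}), where Γ_C(ρ_{AB}|σ_B) := tr((ρ_{AB}(1_A ⊗ σ_B^{−1/2}))²). -/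
open Matrix Kronecker ComplexOrder

noncomputable section

lemma contOn_finite {s : Set ℝ} (hs : s.Finite) (f : ℝ → ℝ) : ContinuousOn f s := by
  rw [continuousOn_iff_continuous_restrict]
  haveI := hs.to_subtype
  exact continuous_of_discreteTopology

lemma kron_conjT {l n : Type*} [Fintype l] [Fintype n] (A : Matrix l l ℂ) (B : Matrix n n ℂ) :
    (A ⊗ₖ B)ᴴ = Aᴴ ⊗ₖ Bᴴ := by
  ext i j
  simp [conjTranspose_apply, kroneckerMap_apply, star_mul', mul_comm]

lemma real_smul_matrix {n : Type*} (r : ℝ) (M : Matrix n n ℂ) : ((r : ℂ) • M) = r • M := by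
  ext i j
  simp [Matrix.smul_apply, Complex.real_smul]

lemma kron_isHermitian {l n : Type*} [Fintype l] [Fintype n] {A : Matrix l l ℂ}
    {B : Matrix n n ℂ} (hA : A.IsHermitian) (hB : B.IsHermitian) : (A ⊗ₖ B).IsHermitian := by
  unfold Matrix.IsHermitian
  rw [kron_conjT, hA.eq, hB.eq]

/-- Generalized inverse square root on the support. -/
def ginvSqrt {n : Type*} [Fintype n] [DecidableEq n] (M : Matrix n n ℂ) :
    Matrix n n ℂ :=
  hermCFC (fun x => if x = 0 then 0 else (Real.sqrt x)⁻¹) M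

lemma hermCFC_eq_cfc {n : Type*} [Fintype n] [DecidableEq n] (f : ℝ → ℝ)
    {M : Matrix n n ℂ} (hM : M.IsHermitian) : hermCFC f M = cfc f M := by
  rw [hermCFC, dif_pos hM, hM.cfc_eq]

lemma hermCFC_posSemidef {n : Type*} [Fintype n] [DecidableEq n] {f : ℝ → ℝ}
    (hf : ∀ x, 0 ≤ f x) {M : Matrix n n ℂ} (hM : M.IsHermitian) :
    (hermCFC f M).PosSemidef := by
  rw [hermCFC, dif_pos hM]
  unfold Matrix.IsHermitian.cfc
  rw [Unitary.conjStarAlgAut_apply, Matrix.star_eq_conjTranspose]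
  refine Matrix.PosSemidef.mul_mul_conjTranspose_same ?_ _
  refine Matrix.PosSemidef.diagonal fun i => ?_
  simpa using hf (hM.eigenvalues i)

/-- `A ↦ 1 ⊗ₖ A` as a star algebra homomorphism. -/
def oneKron (l n : Type*) [Fintype l] [DecidableEq l] [Fintype n] [DecidableEq n] :
    Matrix n n ℂ →⋆ₐ[ℂ] Matrix (l × n) (l × n) ℂ where
  toFun A := (1 : Matrix l l ℂ) ⊗ₖ A
  map_one' := Matrix.one_kronecker_one
  map_mul' A B := by rw [← Matrix.mul_kronecker_mul, Matrix.one_mul]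
  map_zero' := Matrix.kronecker_zero _
  map_add' A B := Matrix.kronecker_add _ A B
  commutes' c := by
    simp only [Algebra.algebraMap_eq_smul_one]
    rw [Matrix.kronecker_smul, Matrix.one_kronecker_one]
  map_star' A := by
    simp only [Matrix.star_eq_conjTranspose, kron_conjT, Matrix.conjTranspose_one]

lemma oneKron_continuous (l n : Type*) [Fintype l] [DecidableEq l] [Fintype n] [DecidableEq n] :
    Continuous (oneKron l n) := by
  apply continuous_pi; intro i; apply continuous_pi; intro j
  show Continuous fun A : Matrix n n ℂ => (1 : Matrix l l ℂ) i.1 j.1 * A i.2 j.2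
  exact continuous_const.mul ((continuous_apply j.2).comp (continuous_apply i.2))

lemma ginvSqrt_smul_one_kron {l n : Type*} [Fintype l] [DecidableEq l] [Fintype n]
    [DecidableEq n] (N : ℕ) (hN : 0 < N) (τ : Matrix n n ℂ) (hτ : τ.IsHermitian) :
    ginvSqrt ((((N : ℂ))⁻¹ • (1 : Matrix l l ℂ)) ⊗ₖ τ) =
      ((Real.sqrt N : ℝ) : ℂ) • ((1 : Matrix l l ℂ) ⊗ₖ ginvSqrt τ) := by
  set f : ℝ → ℝ := fun x => if x = 0 then 0 else (Real.sqrt x)⁻¹ with hf_def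
  set r : ℝ := (N : ℝ)⁻¹ with hr_def
  have hrpos : 0 < r := by positivity
  have h1 : ((((N : ℂ))⁻¹ • (1 : Matrix l l ℂ)) ⊗ₖ τ) = (1 : Matrix l l ℂ) ⊗ₖ (r • τ) := by
    rw [Matrix.smul_kronecker, Matrix.kronecker_smul,
      show ((N : ℂ))⁻¹ = (((N : ℝ)⁻¹ : ℝ) : ℂ) by push_cast; ring]
    exact real_smul_matrix _ _
  have hτ' : (r • τ).IsHermitian := by
    unfold Matrix.IsHermitian at *
    rw [Matrix.conjTranspose_smul, star_trivial, hτ]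
  have big_herm : ((1 : Matrix l l ℂ) ⊗ₖ (r • τ)).IsHermitian :=
    kron_isHermitian Matrix.isHermitian_one hτ'
  have hcont1 : ContinuousOn f (spectrum ℝ (r • τ)) :=
    contOn_finite Matrix.finite_real_spectrum f
  have hcont2 : ContinuousOn f ((r • ·) '' spectrum ℝ τ) :=
    contOn_finite (Matrix.finite_real_spectrum.image _) f
  have hcont3 : ContinuousOn f (spectrum ℝ τ) :=
    contOn_finite Matrix.finite_real_spectrum f
  have hτsa : IsSelfAdjoint τ := hτ
  have hτ'sa : IsSelfAdjoint (r • τ) := hτ'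
  have hfun : (fun x : ℝ => f (r • x)) = fun x => Real.sqrt N • f x := by
    funext x
    by_cases hx : x = 0
    · simp [hx, hf_def]
    · have hrx : r * x ≠ 0 := mul_ne_zero (ne_of_gt hrpos) hx
      simp only [smul_eq_mul, hf_def, if_neg hrx, if_neg hx]
      rw [hr_def, Real.sqrt_mul (by positivity) x, mul_inv, Real.sqrt_inv, inv_inv]
  have key : cfc f (r • τ) = Real.sqrt N • cfc f τ := by
    rw [← cfc_comp_smul r f τ hcont2 hτsa, hfun, cfc_smul (Real.sqrt N) f τ hcont3]
  have hmap : oneKron l n (cfc f (r • τ)) = cfc f (oneKron l n (r • τ)) :=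
    StarAlgHomClass.map_cfc (oneKron l n) f (r • τ) hcont1 (oneKron_continuous l n) hτ'sa big_herm
  rw [ginvSqrt, h1, hermCFC_eq_cfc f big_herm]
  have h2 : cfc f ((1 : Matrix l l ℂ) ⊗ₖ (r • τ)) = oneKron l n (cfc f (r • τ)) := hmap.symm
  rw [h2, key]
  show (1 : Matrix l l ℂ) ⊗ₖ (Real.sqrt N • cfc f τ) = _
  rw [← real_smul_matrix, Matrix.kronecker_smul, ginvSqrt, hermCFC_eq_cfc f hτ]

lemma trace_stdBasis {ι : Type*} [Fintype ι] [DecidableEq ι] (i : ι) :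
    (Matrix.single i i (1 : ℂ)).trace = 1 := by
  simp [Matrix.trace, Matrix.diag, Matrix.single, Matrix.of_apply,
    Finset.sum_ite_eq]

lemma trace_sq_blockdiag {ι n : Type*} [Fintype ι] [DecidableEq ι] [Fintype n] [DecidableEq n]
    (S : ι → Matrix n n ℂ) :
    (((∑ i : ι, Matrix.single i i (1 : ℂ) ⊗ₖ S i)) ^ 2).trace
      = ∑ i : ι, (S i * S i).trace := by
  rw [sq, Finset.sum_mul_sum]
  rw [Matrix.trace_sum]
  refine Finset.sum_congr rfl fun i _ => ?_
  rw [Matrix.trace_sum]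
  rw [Finset.sum_eq_single i]
  · rw [← Matrix.mul_kronecker_mul, Matrix.single_mul_single_same, one_mul,
      Matrix.trace_kronecker, trace_stdBasis, one_mul]
  · intro j _ hji
    rw [← Matrix.mul_kronecker_mul,
      Matrix.single_mul_single_of_ne (i := i) (j := i) (k := j) (h := (Ne.symm hji : i ≠ j)),
      Matrix.zero_kronecker, Matrix.trace_zero]
  · intro h; exact absurd (Finset.mem_univ i) h

lemma psd_trace_re_nonneg {n : Type*} [Fintype n] [DecidableEq n] {P : Matrix n n ℂ}
    (hP : P.PosSemidef) : 0 ≤ P.trace.re := by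
  rw [Matrix.trace, Complex.re_sum]
  refine Finset.sum_nonneg fun i _ => ?_
  have h := hP.dotProduct_mulVec_nonneg (Pi.single i 1)
  have heq : dotProduct (star (Pi.single i (1 : ℂ))) (P *ᵥ Pi.single i 1) = P i i := by
    simp [dotProduct, Matrix.mulVec, Pi.single_apply, star, Finset.mul_sum, mul_ite,
      apply_ite, Complex.ext_iff, Finset.sum_ite_eq]
  rw [heq] at h
  exact (Complex.le_def.mp h).1

open scoped MatrixOrder in
lemma trace_mul_psd_re_nonneg {n : Type*} [Fintype n] [DecidableEq n] {P Q : Matrix n n ℂ}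
    (hP : P.PosSemidef) (hQ : Q.PosSemidef) : 0 ≤ ((P * Q).trace).re := by
  have hm : (CFC.sqrt Q).PosSemidef := (CFC.sqrt_nonneg Q).posSemidef
  have h1 : P * Q = P * CFC.sqrt Q * CFC.sqrt Q := by
    rw [Matrix.mul_assoc, CFC.sqrt_mul_sqrt_self Q hQ.nonneg]
  have h2 : (P * CFC.sqrt Q * CFC.sqrt Q).trace = (CFC.sqrt Q * P * CFC.sqrt Q).trace := by
    rw [Matrix.trace_mul_comm (P * CFC.sqrt Q) (CFC.sqrt Q), Matrix.mul_assoc]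
  rw [h1, h2]
  have h3 := hP.conjTranspose_mul_mul_same (CFC.sqrt Q)
  rw [hm.isHermitian.eq] at h3
  exact psd_trace_re_nonneg h3

open scoped MatrixOrder in
lemma trace_sandwich_re_nonneg {n : Type*} [Fintype n] [DecidableEq n]
    {A B g : Matrix n n ℂ} (hA : A.PosSemidef) (hB : B.PosSemidef) (hg : g.PosSemidef) :
    0 ≤ (((A * g) * (B * g)).trace).re := by
  set k := CFC.sqrt g with hk_def
  have hk : k.PosSemidef := (CFC.sqrt_nonneg g).posSemidef
  have hgkk : g = k * k := (CFC.sqrt_mul_sqrt_self g hg.nonneg).symm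
  have e1 : (A * g) * (B * g) = ((A * (k * k)) * (B * k)) * k := by
    rw [hgkk]; simp only [Matrix.mul_assoc]
  have e2 : (k * A * k) * (k * B * k) = k * ((A * (k * k)) * (B * k)) := by
    simp only [Matrix.mul_assoc]
  rw [e1, Matrix.trace_mul_comm, ← e2]
  have hP : (k * A * k).PosSemidef := by
    have := hA.conjTranspose_mul_mul_same k; rwa [hk.isHermitian.eq] at this
  have hQ : (k * B * k).PosSemidef := by
    have := hB.conjTranspose_mul_mul_same k; rwa [hk.isHermitian.eq] at this
  exact trace_mul_psd_re_nonneg hP hQ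

/-- Collision-entropy bound for δ-almost two-universal hashing of a CQ state:
`Γ_C(ρ_{FZE} | ρ_F ⊗ τ_E) ≤ Γ_C(ρ_{XE} | τ_E) + δ tr(ρ_E τ_E^{−1/2} ρ_E τ_E^{−1/2})`,
where `Γ_C(ρ_{AB}|σ_B) = tr((ρ_{AB}(1_A ⊗ σ_B^{−1/2}))²)`, `ρ_{XE} = Σ_x |x⟩⟨x| ⊗ ρ_E^{[x]}`
and `ρ_{FZE} = Σ_{f,z} |F|⁻¹ |f,z⟩⟨f,z| ⊗ Σ_{x : f(x)=z} ρ_E^{[x]}`. -/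
theorem collision_entropy_hashing_bound
    {𝒳 F : Type*} [Fintype 𝒳] [DecidableEq 𝒳] [Fintype F] [DecidableEq F]
    [Nonempty F] {ℓ dE : ℕ} (δ : ℝ) (hδ : 0 ≤ δ)
    (hash : F → 𝒳 → (Fin ℓ → Bool))
    (htu : ∀ x x' : 𝒳, x ≠ x' →
      ((Finset.univ.filter (fun f : F => hash f x = hash f x')).card : ℝ) /
        (Fintype.card F : ℝ) ≤ δ)
    (ρE : 𝒳 → Matrix (Fin dE) (Fin dE) ℂ) (hρE : ∀ x, (ρE x).PosSemidef)
    (τE : Matrix (Fin dE) (Fin dE) ℂ) (hτE : τE.PosSemidef) (hτtr : τE.trace = 1)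
    (hsupp : ∀ v : Fin dE → ℂ, τE.mulVec v = 0 → (∑ x : 𝒳, ρE x).mulVec v = 0) :
    ((((∑ f : F, ∑ z : Fin ℓ → Bool, ((Fintype.card F : ℂ))⁻¹ •
          (Matrix.single (f, z) (f, z) (1 : ℂ) ⊗ₖ
            (∑ x ∈ Finset.univ.filter (fun x => hash f x = z), ρE x))) *
        ginvSqrt ((((Fintype.card F : ℂ))⁻¹ •
          (1 : Matrix ((F × (Fin ℓ → Bool))) ((F × (Fin ℓ → Bool))) ℂ)) ⊗ₖ τE)) ^ 2).trace).re
      ≤ ((((∑ x : 𝒳, Matrix.single x x (1 : ℂ) ⊗ₖ ρE x) *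
            ((1 : Matrix 𝒳 𝒳 ℂ) ⊗ₖ ginvSqrt τE)) ^ 2).trace).re +
        δ * (((∑ x : 𝒳, ρE x) * ginvSqrt τE * (∑ x : 𝒳, ρE x) * ginvSqrt τE).trace).re := by
  classical
  have hτH : τE.IsHermitian := hτE.1
  set g := ginvSqrt τE with hg_def
  have hg : g.PosSemidef := by
    refine hermCFC_posSemidef (fun x => ?_) hτH
    split
    · exact le_refl 0
    · positivity
  set N := Fintype.card F with hN_def
  have hNpos : 0 < N := Fintype.card_pos
  have hNR : (0 : ℝ) < (N : ℝ) := by exact_mod_cast hNpos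
  set t : 𝒳 → 𝒳 → ℝ := fun x x' => (((ρE x * g) * (ρE x' * g)).trace).re with ht_def
  have ht0 : ∀ x x', 0 ≤ t x x' := fun x x' =>
    trace_sandwich_re_nonneg (hρE x) (hρE x') hg
  -- Step A : compute the generalized inverse square root of the conditioning state
  rw [ginvSqrt_smul_one_kron N hNpos τE hτH]
  -- abbreviations
  set S : F → (Fin ℓ → Bool) → Matrix (Fin dE) (Fin dE) ℂ :=
    fun f z => ∑ x ∈ Finset.univ.filter (fun x => hash f x = z), ρE x with hS_def
  -- Step B : block-diagonal trace computation for the LHS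
  have e1 : (∑ f : F, ∑ z : Fin ℓ → Bool, ((N : ℂ))⁻¹ •
        (Matrix.single (f, z) (f, z) (1 : ℂ) ⊗ₖ S f z))
      = ((N : ℂ))⁻¹ • ∑ p : F × (Fin ℓ → Bool),
          Matrix.single p p (1 : ℂ) ⊗ₖ S p.1 p.2 := by
    rw [Finset.smul_sum]
    rw [Fintype.sum_prod_type (f := fun p : F × (Fin ℓ → Bool) =>
      ((N : ℂ))⁻¹ • (Matrix.single p p (1 : ℂ) ⊗ₖ S p.1 p.2))]
  have e2 : (∑ p : F × (Fin ℓ → Bool), Matrix.single p p (1 : ℂ) ⊗ₖ S p.1 p.2) *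
        ((1 : Matrix (F × (Fin ℓ → Bool)) (F × (Fin ℓ → Bool)) ℂ) ⊗ₖ g)
      = ∑ p : F × (Fin ℓ → Bool), Matrix.single p p (1 : ℂ) ⊗ₖ (S p.1 p.2 * g) := by
    rw [Finset.sum_mul]
    refine Finset.sum_congr rfl fun p _ => ?_
    rw [← Matrix.mul_kronecker_mul, Matrix.mul_one]
  have e3 : ((N : ℂ))⁻¹ * ((Real.sqrt N : ℝ) : ℂ) * (((N : ℂ))⁻¹ * ((Real.sqrt N : ℝ) : ℂ))
      = (((N : ℝ)⁻¹ : ℝ) : ℂ) := by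
    have hC : ((N : ℂ)) ≠ 0 := Nat.cast_ne_zero.mpr hNpos.ne'
    have hs : ((Real.sqrt N : ℝ) : ℂ) * ((Real.sqrt N : ℝ) : ℂ) = (N : ℂ) := by
      rw [← Complex.ofReal_mul, Real.mul_self_sqrt (by positivity)]
      push_cast; ring
    rw [show ((N : ℂ))⁻¹ * ((Real.sqrt N : ℝ) : ℂ) * (((N : ℂ))⁻¹ * ((Real.sqrt N : ℝ) : ℂ))
        = (((Real.sqrt N : ℝ) : ℂ) * ((Real.sqrt N : ℝ) : ℂ)) * (((N : ℂ))⁻¹ * ((N : ℂ))⁻¹)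
      from by ring, hs]
    push_cast
    field_simp
  have hLHS : (((∑ f : F, ∑ z : Fin ℓ → Bool, ((N : ℂ))⁻¹ •
          (Matrix.single (f, z) (f, z) (1 : ℂ) ⊗ₖ S f z)) *
        (((Real.sqrt N : ℝ) : ℂ) •
          ((1 : Matrix (F × (Fin ℓ → Bool)) (F × (Fin ℓ → Bool)) ℂ) ⊗ₖ g))) ^ 2).trace
      = (((N : ℝ)⁻¹ : ℝ) : ℂ) * ∑ p : F × (Fin ℓ → Bool),
          ((S p.1 p.2 * g) * (S p.1 p.2 * g)).trace := by
    rw [e1, Matrix.smul_mul, Matrix.mul_smul, e2, smul_smul, smul_pow, Matrix.trace_smul,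
      trace_sq_blockdiag, smul_eq_mul, pow_two, e3]
  rw [hLHS]
  -- Step C : the right-hand side traces
  have eR1 : ((((∑ x : 𝒳, Matrix.single x x (1 : ℂ) ⊗ₖ ρE x) *
        ((1 : Matrix 𝒳 𝒳 ℂ) ⊗ₖ g)) ^ 2).trace).re = ∑ x : 𝒳, t x x := by
    have : (∑ x : 𝒳, Matrix.single x x (1 : ℂ) ⊗ₖ ρE x) *
        ((1 : Matrix 𝒳 𝒳 ℂ) ⊗ₖ g) = ∑ x : 𝒳, Matrix.single x x (1 : ℂ) ⊗ₖ (ρE x * g) := by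
      rw [Finset.sum_mul]
      refine Finset.sum_congr rfl fun x _ => ?_
      rw [← Matrix.mul_kronecker_mul, Matrix.mul_one]
    rw [this, trace_sq_blockdiag, Complex.re_sum]
  have eR2 : (((∑ x : 𝒳, ρE x) * g * (∑ x : 𝒳, ρE x) * g).trace).re
      = ∑ x : 𝒳, ∑ x' : 𝒳, t x x' := by
    have h1 : (∑ x : 𝒳, ρE x) * g * (∑ x : 𝒳, ρE x) * g
        = ((∑ x : 𝒳, ρE x) * g) * ((∑ x : 𝒳, ρE x) * g) := by
      simp only [Matrix.mul_assoc]
    have h2 : (∑ x : 𝒳, ρE x) * g = ∑ x : 𝒳, ρE x * g := by rw [Finset.sum_mul]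
    rw [h1, h2, Finset.sum_mul_sum, Matrix.trace_sum, Complex.re_sum]
    refine Finset.sum_congr rfl fun x _ => ?_
    rw [Matrix.trace_sum, Complex.re_sum]
  rw [eR1, eR2]
  -- Step D : expand the LHS into the real double sums
  have hexp : ∀ (f : F) (z : Fin ℓ → Bool),
      (((S f z * g) * (S f z * g)).trace).re
        = ∑ x ∈ Finset.univ.filter (fun x => hash f x = z),
            ∑ x' ∈ Finset.univ.filter (fun x => hash f x = z), t x x' := by
    intro f z
    rw [hS_def]
    dsimp only
    rw [Finset.sum_mul, Finset.sum_mul_sum, Matrix.trace_sum, Complex.re_sum]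
    refine Finset.sum_congr rfl fun x _ => ?_
    rw [Matrix.trace_sum, Complex.re_sum]
  have hre : ((((N : ℝ)⁻¹ : ℝ) : ℂ) * ∑ p : F × (Fin ℓ → Bool),
        ((S p.1 p.2 * g) * (S p.1 p.2 * g)).trace).re
      = (N : ℝ)⁻¹ * ∑ f : F, ∑ z : Fin ℓ → Bool,
          ∑ x ∈ Finset.univ.filter (fun x => hash f x = z),
            ∑ x' ∈ Finset.univ.filter (fun x => hash f x = z), t x x' := by
    rw [Complex.re_ofReal_mul, Complex.re_sum]
    congr 1
    rw [Fintype.sum_prod_type (f := fun p : F × (Fin ℓ → Bool) =>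
      (((S p.1 p.2 * g) * (S p.1 p.2 * g)).trace).re)]
    exact Finset.sum_congr rfl fun f _ => Finset.sum_congr rfl fun z _ => hexp f z
  rw [hre]
  -- Step E : collapse the sum over z
  have hz : ∀ f : F, (∑ z : Fin ℓ → Bool,
        ∑ x ∈ Finset.univ.filter (fun x => hash f x = z),
          ∑ x' ∈ Finset.univ.filter (fun x => hash f x = z), t x x')
      = ∑ x : 𝒳, ∑ x' : 𝒳, if hash f x' = hash f x then t x x' else 0 := by
    intro f
    simp only [Finset.sum_filter]
    rw [Finset.sum_comm]
    refine Finset.sum_congr rfl fun x _ => ?_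
    rw [Finset.sum_ite_eq Finset.univ (hash f x)
      (fun z => ∑ x' : 𝒳, if hash f x' = z then t x x' else 0)]
    simp
  have hswap : (∑ f : F, ∑ x : 𝒳, ∑ x' : 𝒳, if hash f x' = hash f x then t x x' else 0)
      = ∑ x : 𝒳, ∑ x' : 𝒳, ((Finset.univ.filter (fun f : F => hash f x' = hash f x)).card : ℝ)
          * t x x' := by
    rw [Finset.sum_comm]
    refine Finset.sum_congr rfl fun x _ => ?_
    rw [Finset.sum_comm]
    refine Finset.sum_congr rfl fun x' _ => ?_
    rw [← Finset.sum_filter, Finset.sum_const, nsmul_eq_mul]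
  have hLfinal : (N : ℝ)⁻¹ * ∑ f : F, ∑ z : Fin ℓ → Bool,
        ∑ x ∈ Finset.univ.filter (fun x => hash f x = z),
          ∑ x' ∈ Finset.univ.filter (fun x => hash f x = z), t x x'
      = (N : ℝ)⁻¹ * ∑ x : 𝒳, ∑ x' : 𝒳,
          ((Finset.univ.filter (fun f : F => hash f x' = hash f x)).card : ℝ) * t x x' := by
    congr 1
    rw [← hswap]
    exact Finset.sum_congr rfl fun f _ => hz f
  rw [hLfinal]
  -- Step F : final inequality
  rw [Finset.mul_sum]
  have rhs_eq : (∑ x : 𝒳, t x x) + δ * ∑ x : 𝒳, ∑ x' : 𝒳, t x x'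
      = ∑ x : 𝒳, (t x x + δ * ∑ x' : 𝒳, t x x') := by
    rw [Finset.mul_sum, ← Finset.sum_add_distrib]
  rw [rhs_eq]
  refine Finset.sum_le_sum fun x _ => ?_
  rw [← Finset.add_sum_erase Finset.univ
      (fun x' => ((Finset.univ.filter (fun f : F => hash f x' = hash f x)).card : ℝ) * t x x')
      (Finset.mem_univ x),
    ← Finset.add_sum_erase Finset.univ (fun x' => t x x') (Finset.mem_univ x)]
  have hdiag : ((Finset.univ.filter (fun f : F => hash f x = hash f x)).card : ℝ) = (N : ℝ) := by
    simp [hN_def]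
  rw [mul_add]
  refine add_le_add ?_ ?_
  · rw [hdiag, ← mul_assoc, inv_mul_cancel₀ hNR.ne', one_mul]
  · have step : (N : ℝ)⁻¹ * ∑ x' ∈ Finset.univ.erase x,
        ((Finset.univ.filter (fun f : F => hash f x' = hash f x)).card : ℝ) * t x x'
        ≤ ∑ x' ∈ Finset.univ.erase x, δ * t x x' := by
      rw [Finset.mul_sum]
      refine Finset.sum_le_sum fun x' hx' => ?_
      have hne : x' ≠ x := Finset.ne_of_mem_erase hx'
      have hb := htu x' x hne
      calc (N : ℝ)⁻¹ * (((Finset.univ.filter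
              (fun f : F => hash f x' = hash f x)).card : ℝ) * t x x')
          = (((Finset.univ.filter (fun f : F => hash f x' = hash f x)).card : ℝ) / (N : ℝ))
              * t x x' := by ring
        _ ≤ δ * t x x' := mul_le_mul_of_nonneg_right hb (ht0 x x')
    refine le_trans step ?_
    have : δ * (t x x + ∑ x' ∈ Finset.univ.erase x, t x x')
        = δ * t x x + ∑ x' ∈ Finset.univ.erase x, δ * t x x' := by
      rw [mul_add, Finset.mul_sum]
    rw [this]
    exact le_add_of_nonneg_left (mul_nonneg hδ (ht0 x x))
end
end

section
/- For a subnormalized bipartite state ρ_{AB} and a normalized state σ_B, the max relative entropy satisfies D_max(ρ_{AB} ‖ 1_A ⊗ σ_B) ≥ log Γ_C(ρ_{AB}|σ_B) − log tr(ρ_{AB}), where Γ_C(ρ_{AB}|σ_B) = tr((ρ_{AB}(1_A ⊗ σ_B^{−1/2}))²) and D_max(ρ‖τ) = inf{λ ∈ ℝ : ρ ≤ 2^λ τ}. -/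
open Matrix Kronecker ComplexOrder

noncomputable section

/-- The max relative entropy `D_max(ρ‖τ) = inf{λ : ρ ≤ 2^λ τ}` (Löwner order). -/
def Dmax {n : Type*} [Fintype n] [DecidableEq n] (ρ τ : Matrix n n ℂ) : ℝ :=
  sInf {lam : ℝ | ((((2 : ℝ) ^ lam : ℝ) : ℂ) • τ - ρ).PosSemidef}

set_option linter.unusedSectionVars false

namespace DmaxAux


variable {n : Type*} [Fintype n] [DecidableEq n]

lemma cfc_herm {A : Matrix n n ℂ} (hA : A.IsHermitian) (f : ℝ → ℝ) :
    (hA.cfc f).IsHermitian := by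
  unfold Matrix.IsHermitian.cfc
  simp only [Unitary.conjStarAlgAut_apply]
  unfold Matrix.IsHermitian
  rw [star_eq_conjTranspose, conjTranspose_mul, conjTranspose_mul, conjTranspose_conjTranspose,
    ← star_eq_conjTranspose (hA.eigenvectorUnitary : Matrix n n ℂ), diagonal_conjTranspose,
    mul_assoc]
  congr 1
  ext i j
  simp [Pi.star_def, Function.comp]

lemma cfc_mul {A : Matrix n n ℂ} (hA : A.IsHermitian) (f g : ℝ → ℝ) :
    hA.cfc f * hA.cfc g = hA.cfc (fun x => f x * g x) := by
  unfold Matrix.IsHermitian.cfc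
  simp only [Unitary.conjStarAlgAut_apply]
  have h1 : star (hA.eigenvectorUnitary : Matrix n n ℂ) * (hA.eigenvectorUnitary : Matrix n n ℂ)
      = 1 := Unitary.star_mul_self_of_mem (SetLike.coe_mem _)
  have h2 : diagonal (RCLike.ofReal ∘ f ∘ hA.eigenvalues) *
      diagonal (RCLike.ofReal ∘ g ∘ hA.eigenvalues)
      = diagonal ((RCLike.ofReal : ℝ → ℂ) ∘ (fun x => f x * g x) ∘ hA.eigenvalues) := by
    rw [diagonal_mul_diagonal]
    exact congrArg diagonal (by funext i; simp)
  simp only [mul_assoc]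
  rw [← mul_assoc (star _) (_ : Matrix n n ℂ), h1, one_mul,
    ← mul_assoc (diagonal _) (diagonal _), h2]

lemma cfc_congr {A : Matrix n n ℂ} (hA : A.IsHermitian) {f g : ℝ → ℝ}
    (h : ∀ i, f (hA.eigenvalues i) = g (hA.eigenvalues i)) : hA.cfc f = hA.cfc g := by
  unfold Matrix.IsHermitian.cfc
  simp only [Unitary.conjStarAlgAut_apply]
  have : ((RCLike.ofReal : ℝ → ℂ) ∘ f ∘ hA.eigenvalues)
      = ((RCLike.ofReal : ℝ → ℂ) ∘ g ∘ hA.eigenvalues) := by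
    funext i; simp [h i]
  rw [this]

lemma cfc_psd {A : Matrix n n ℂ} (hA : A.IsHermitian) {f : ℝ → ℝ}
    (hf : ∀ i, 0 ≤ f (hA.eigenvalues i)) : (hA.cfc f).PosSemidef := by
  unfold Matrix.IsHermitian.cfc
  simp only [Unitary.conjStarAlgAut_apply]
  rw [star_eq_conjTranspose]
  refine Matrix.PosSemidef.mul_mul_conjTranspose_same ?_ _
  refine Matrix.PosSemidef.diagonal ?_
  intro i
  have : ((0:ℝ):ℂ) ≤ ((f (hA.eigenvalues i) : ℝ) : ℂ) := by exact_mod_cast hf i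
  simpa using this

lemma cfc_id {A : Matrix n n ℂ} (hA : A.IsHermitian) : hA.cfc (fun x => x) = A := by
  conv_rhs => rw [hA.spectral_theorem]
  rfl

lemma cfc_one {A : Matrix n n ℂ} (hA : A.IsHermitian) : hA.cfc (fun _ => 1) = 1 := by
  unfold Matrix.IsHermitian.cfc
  simp only [Unitary.conjStarAlgAut_apply]
  have : diagonal ((RCLike.ofReal : ℝ → ℂ) ∘ (fun _ => (1:ℝ)) ∘ hA.eigenvalues)
      = (1 : Matrix n n ℂ) := by
    rw [← diagonal_one]
    exact congrArg diagonal (by funext i; simp)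
  rw [this, mul_one]
  exact Unitary.mul_star_self_of_mem (SetLike.coe_mem _)

lemma cfc_sub {A : Matrix n n ℂ} (hA : A.IsHermitian) (f g : ℝ → ℝ) :
    hA.cfc f - hA.cfc g = hA.cfc (fun x => f x - g x) := by
  unfold Matrix.IsHermitian.cfc
  simp only [Unitary.conjStarAlgAut_apply]
  rw [← sub_mul, ← mul_sub]
  congr 2
  ext i j
  rcases eq_or_ne i j with rfl | hij
  · simp
  · simp [Matrix.diagonal_apply_ne _ hij]

noncomputable def _root_.Matrix.PosSemidef.sqrt {A : Matrix n n ℂ} (hA : A.PosSemidef) :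
    Matrix n n ℂ :=
  hA.1.cfc Real.sqrt

lemma _root_.Matrix.PosSemidef.posSemidef_sqrt {A : Matrix n n ℂ} (hA : A.PosSemidef) :
    hA.sqrt.PosSemidef :=
  DmaxAux.cfc_psd hA.1 (fun _ => Real.sqrt_nonneg _)

lemma _root_.Matrix.PosSemidef.sqrt_mul_self {A : Matrix n n ℂ} (hA : A.PosSemidef) :
    hA.sqrt * hA.sqrt = A := by
  unfold Matrix.PosSemidef.sqrt
  rw [DmaxAux.cfc_mul]
  conv_rhs => rw [← DmaxAux.cfc_id hA.1]
  exact DmaxAux.cfc_congr hA.1 (fun i => Real.mul_self_sqrt (hA.eigenvalues_nonneg i))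

lemma trace_nonneg {X : Matrix n n ℂ} (hX : X.PosSemidef) : 0 ≤ X.trace := by
  rw [Matrix.trace]
  apply Finset.sum_nonneg
  intro i _
  have h := hX.dotProduct_mulVec_nonneg (Pi.single i 1)
  simpa [Matrix.mulVec_single, dotProduct, Pi.single_apply, Matrix.diag] using h

lemma trace_mul_nonneg {A B : Matrix n n ℂ} (hA : A.PosSemidef) (hB : B.PosSemidef) :
    0 ≤ (A * B).trace := by
  have hs := hA.sqrt_mul_self
  have hpsd : (hA.sqrt * B * hA.sqrt).PosSemidef := by
    have := hB.conjTranspose_mul_mul_same hA.sqrt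
    rwa [hA.posSemidef_sqrt.isHermitian.eq] at this
  calc (0:ℂ) ≤ (hA.sqrt * B * hA.sqrt).trace := trace_nonneg hpsd
    _ = (A * B).trace := by
        rw [trace_mul_comm, ← mul_assoc, hs]

lemma eq_zero_of_trace_conjTranspose_mul_self {A : Matrix n n ℂ}
    (h : (Aᴴ * A).trace = 0) : A = 0 := by
  have h2 : ∀ j i, A i j = 0 := by
    have hre : (∑ j, ∑ i, Complex.normSq (A i j) : ℝ) = 0 := by
      have heq : (Aᴴ * A).trace = ∑ j, ∑ i, (Complex.normSq (A i j) : ℂ) := by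
        rw [Matrix.trace]
        congr 1
        ext j
        simp [Matrix.mul_apply, Matrix.diag, Matrix.conjTranspose_apply,
          Complex.normSq_eq_conj_mul_self]
      rw [heq] at h
      exact_mod_cast h
    intro j i
    have hnn : ∀ p ∈ Finset.univ, (0:ℝ) ≤ ∑ i, Complex.normSq (A i p) :=
      fun p _ => Finset.sum_nonneg fun i _ => Complex.normSq_nonneg _
    have hj := (Finset.sum_eq_zero_iff_of_nonneg hnn).mp hre j (Finset.mem_univ j)
    have hi := (Finset.sum_eq_zero_iff_of_nonneg
      (fun i _ => Complex.normSq_nonneg (A i j))).mp hj i (Finset.mem_univ i)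
    exact Complex.normSq_eq_zero.mp hi
  ext i j
  exact h2 j i


variable {m : Type*} [Fintype m] [DecidableEq m]

lemma kron_conjT (A : Matrix m m ℂ) (B : Matrix n n ℂ) :
    (A ⊗ₖ B)ᴴ = Aᴴ ⊗ₖ Bᴴ := by
  ext ⟨i, j⟩ ⟨k, l⟩
  simp [Matrix.conjTranspose_apply, Matrix.kroneckerMap_apply]

lemma kron_psd {A : Matrix m m ℂ} {B : Matrix n n ℂ}
    (hA : A.PosSemidef) (hB : B.PosSemidef) : (A ⊗ₖ B).PosSemidef := by
  exact hA.kronecker hB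

lemma one_kron_mul (A B : Matrix n n ℂ) :
    ((1 : Matrix m m ℂ) ⊗ₖ A) * ((1 : Matrix m m ℂ) ⊗ₖ B) = (1 : Matrix m m ℂ) ⊗ₖ (A * B) := by
  rw [← Matrix.mul_kronecker_mul, one_mul]

lemma kron_sub_right (A : Matrix m m ℂ) (B C : Matrix n n ℂ) :
    A ⊗ₖ (B - C) = A ⊗ₖ B - A ⊗ₖ C := by
  ext ⟨i, j⟩ ⟨k, l⟩
  simp [Matrix.kroneckerMap_apply, Matrix.sub_apply, mul_sub]

end DmaxAux

/-- `D_max(ρ_{AB}‖1_A ⊗ σ_B) ≥ log₂ Γ_C(ρ_{AB}|σ_B) − log₂ tr ρ_{AB}`, where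
`Γ_C(ρ_{AB}|σ_B) = tr((ρ_{AB}(1_A ⊗ σ_B^{−1/2}))²)`. -/
theorem dmax_ge_log_collision {dA dB : ℕ}
    (ρAB : Matrix (Fin dA × Fin dB) (Fin dA × Fin dB) ℂ)
    (hρAB : ρAB.PosSemidef) (htr : 0 < ρAB.trace.re) (htr1 : ρAB.trace.re ≤ 1)
    (σB : Matrix (Fin dB) (Fin dB) ℂ) (hσB : σB.PosSemidef) (hσtr : σB.trace = 1)
    (hfeas : {lam : ℝ | ((((2 : ℝ) ^ lam : ℝ) : ℂ) •
        ((1 : Matrix (Fin dA) (Fin dA) ℂ) ⊗ₖ σB) - ρAB).PosSemidef}.Nonempty) :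
    Real.logb 2
        (((ρAB * ((1 : Matrix (Fin dA) (Fin dA) ℂ) ⊗ₖ ginvSqrt σB)) ^ 2).trace.re) -
      Real.logb 2 (ρAB.trace.re)
    ≤ Dmax ρAB ((1 : Matrix (Fin dA) (Fin dA) ℂ) ⊗ₖ σB) := by
  classical
  have hH : σB.IsHermitian := hσB.1
  set f : ℝ → ℝ := fun x => if x = 0 then 0 else (Real.sqrt x)⁻¹ with hf_def
  have hginv : ginvSqrt σB = hH.cfc f := by
    unfold ginvSqrt hermCFC
    rw [dif_pos hH]
  set g : ℝ → ℝ := fun x => f x * x * f x with hg_def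
  have hf_nonneg : ∀ x : ℝ, 0 ≤ f x := by
    intro x
    simp only [hf_def]
    split
    · exact le_refl 0
    · positivity
  have hg_zero : g 0 = 0 := by simp [hg_def, hf_def]
  have hg_one : ∀ x : ℝ, 0 < x → g x = 1 := by
    intro x hx
    have hs : Real.sqrt x ≠ 0 := (Real.sqrt_pos.mpr hx).ne'
    simp only [hg_def, hf_def, if_neg hx.ne']
    rw [← Real.mul_self_sqrt hx.le]
    field_simp
    rw [Real.sqrt_sq (Real.sqrt_nonneg x)]
  have hg_nonneg : ∀ x : ℝ, 0 ≤ x → 0 ≤ g x := by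
    intro x hx
    rcases hx.eq_or_lt with rfl | hx'
    · rw [hg_zero]
    · rw [hg_one x hx']; norm_num
  have hg_le_one : ∀ x : ℝ, 0 ≤ x → g x ≤ 1 := by
    intro x hx
    rcases hx.eq_or_lt with rfl | hx'
    · rw [hg_zero]; norm_num
    · rw [hg_one x hx']
  have hg_mul_self : ∀ x : ℝ, 0 ≤ x → g x * g x = g x := by
    intro x hx
    rcases hx.eq_or_lt with rfl | hx'
    · rw [hg_zero]; ring
    · rw [hg_one x hx']; ring
  have hg_mul_id : ∀ x : ℝ, 0 ≤ x → g x * x = x := by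
    intro x hx
    rcases hx.eq_or_lt with rfl | hx'
    · rw [hg_zero]; ring
    · rw [hg_one x hx']; ring
  have hev : ∀ i, 0 ≤ hH.eigenvalues i := fun i => hσB.eigenvalues_nonneg i
  set N : Matrix (Fin dB) (Fin dB) ℂ := hH.cfc f with hN_def
  set Pi : Matrix (Fin dB) (Fin dB) ℂ := hH.cfc g with hPi_def
  have hN_psd : N.PosSemidef := DmaxAux.cfc_psd hH (fun i => hf_nonneg _)
  have hPi_psd : Pi.PosSemidef := DmaxAux.cfc_psd hH (fun i => hg_nonneg _ (hev i))
  have hNσN : N * σB * N = Pi := by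
    conv_lhs => rw [show σB = hH.cfc (fun x => x) from (DmaxAux.cfc_id hH).symm]
    rw [hN_def, DmaxAux.cfc_mul, DmaxAux.cfc_mul, hPi_def]
  have hPiσ : Pi * σB = σB := by
    conv_lhs => rw [show σB = hH.cfc (fun x => x) from (DmaxAux.cfc_id hH).symm]
    rw [hPi_def, DmaxAux.cfc_mul]
    conv_rhs => rw [show σB = hH.cfc (fun x => x) from (DmaxAux.cfc_id hH).symm]
    exact DmaxAux.cfc_congr hH (fun i => by simpa using hg_mul_id _ (hev i))
  have hPiPi : Pi * Pi = Pi := by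
    rw [hPi_def, DmaxAux.cfc_mul]
    exact DmaxAux.cfc_congr hH (fun i => by simpa using hg_mul_self _ (hev i))
  have h1Pi_psd : ((1 : Matrix (Fin dB) (Fin dB) ℂ) - Pi).PosSemidef := by
    rw [← DmaxAux.cfc_one hH, hPi_def, DmaxAux.cfc_sub]
    exact DmaxAux.cfc_psd hH (fun i => sub_nonneg.mpr (hg_le_one _ (hev i)))
  set τ : Matrix (Fin dA × Fin dB) (Fin dA × Fin dB) ℂ :=
    (1 : Matrix (Fin dA) (Fin dA) ℂ) ⊗ₖ σB with hτ_def
  set M : Matrix (Fin dA × Fin dB) (Fin dA × Fin dB) ℂ :=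
    (1 : Matrix (Fin dA) (Fin dA) ℂ) ⊗ₖ N with hM_def
  set P : Matrix (Fin dA × Fin dB) (Fin dA × Fin dB) ℂ :=
    (1 : Matrix (Fin dA) (Fin dA) ℂ) ⊗ₖ Pi with hP_def
  have hM_psd : M.PosSemidef := DmaxAux.kron_psd Matrix.PosSemidef.one hN_psd
  have hM_herm : M.IsHermitian := hM_psd.1
  have hP_psd : P.PosSemidef := DmaxAux.kron_psd Matrix.PosSemidef.one hPi_psd
  have hMτM : M * τ * M = P := by
    rw [hM_def, hτ_def, DmaxAux.one_kron_mul, DmaxAux.one_kron_mul, hNσN, hP_def]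
  have hPτ : P * τ = τ := by rw [hP_def, hτ_def, DmaxAux.one_kron_mul, hPiσ]
  have hPP : P * P = P := by rw [hP_def, DmaxAux.one_kron_mul, hPiPi]
  have h1P_psd : ((1 : Matrix (Fin dA × Fin dB) (Fin dA × Fin dB) ℂ) - P).PosSemidef := by
    rw [show (1 : Matrix (Fin dA × Fin dB) (Fin dA × Fin dB) ℂ)
        = (1 : Matrix (Fin dA) (Fin dA) ℂ) ⊗ₖ (1 : Matrix (Fin dB) (Fin dB) ℂ) from
      (Matrix.one_kronecker_one).symm, hP_def, ← DmaxAux.kron_sub_right]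
    exact DmaxAux.kron_psd Matrix.PosSemidef.one h1Pi_psd
  have h1P_herm : ((1 : Matrix (Fin dA × Fin dB) (Fin dA × Fin dB) ℂ) - P).IsHermitian :=
    h1P_psd.1
  set Y : Matrix (Fin dA × Fin dB) (Fin dA × Fin dB) ℂ := M * ρAB * M with hY_def
  have hY_psd : Y.PosSemidef := by
    have := hρAB.conjTranspose_mul_mul_same M
    rwa [hM_herm.eq, ← hY_def] at this
  have htrΓ : ((ρAB * M) ^ 2).trace = (ρAB * Y).trace := by
    rw [pow_two, hY_def]
    congr 1
    simp only [Matrix.mul_assoc]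
  have hMg : (1 : Matrix (Fin dA) (Fin dA) ℂ) ⊗ₖ ginvSqrt σB = M := by
    rw [hginv, hM_def]
  unfold Dmax
  apply le_csInf hfeas
  intro lam hlam
  simp only [Set.mem_setOf_eq] at hlam
  set c : ℂ := (((2 : ℝ) ^ lam : ℝ) : ℂ) with hc_def
  have hPρtr : (P * ρAB).trace = ρAB.trace := by
    have hconj : (((1 : Matrix _ _ ℂ) - P) * (c • τ - ρAB) *
        ((1 : Matrix _ _ ℂ) - P)).PosSemidef := by
      have := hlam.mul_mul_conjTranspose_same ((1 : Matrix _ _ ℂ) - P)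
      rwa [h1P_herm.eq] at this
    have hρconj : (((1 : Matrix _ _ ℂ) - P) * ρAB * ((1 : Matrix _ _ ℂ) - P)).PosSemidef := by
      have := hρAB.mul_mul_conjTranspose_same ((1 : Matrix _ _ ℂ) - P)
      rwa [h1P_herm.eq] at this
    have h1Pτ0 : ((1 : Matrix _ _ ℂ) - P) * τ = 0 := by
      rw [sub_mul, one_mul, hPτ, sub_self]
    have hexpand : ((1 : Matrix _ _ ℂ) - P) * (c • τ - ρAB) * ((1 : Matrix _ _ ℂ) - P)
        = -(((1 : Matrix _ _ ℂ) - P) * ρAB * ((1 : Matrix _ _ ℂ) - P)) := by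
      rw [mul_sub ((1 : Matrix _ _ ℂ) - P) (c • τ) ρAB, Matrix.mul_smul, h1Pτ0, smul_zero,
        zero_sub, neg_mul]
    have htr0 : (((1 : Matrix _ _ ℂ) - P) * ρAB * ((1 : Matrix _ _ ℂ) - P)).trace = 0 := by
      refine le_antisymm ?_ (DmaxAux.trace_nonneg hρconj)
      have h2 := DmaxAux.trace_nonneg hconj
      rw [hexpand, trace_neg] at h2
      exact neg_nonneg.mp h2
    have h1P1P : ((1 : Matrix _ _ ℂ) - P) * ((1 : Matrix _ _ ℂ) - P)
        = (1 : Matrix (Fin dA × Fin dB) (Fin dA × Fin dB) ℂ) - P := by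
      rw [mul_sub, mul_one, sub_mul, one_mul, hPP, sub_self, sub_zero]
    have hsimp : (((1 : Matrix _ _ ℂ) - P) * ρAB * ((1 : Matrix _ _ ℂ) - P)).trace
        = ρAB.trace - (P * ρAB).trace := by
      calc (((1 : Matrix _ _ ℂ) - P) * ρAB * ((1 : Matrix _ _ ℂ) - P)).trace
          = ((((1 : Matrix _ _ ℂ) - P) * (((1 : Matrix _ _ ℂ) - P) * ρAB))).trace := by
            rw [trace_mul_comm]
        _ = (((((1 : Matrix _ _ ℂ) - P) * ((1 : Matrix _ _ ℂ) - P))) * ρAB).trace := by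
            congr 1
            simp only [Matrix.mul_assoc]
        _ = ((((1 : Matrix _ _ ℂ) - P)) * ρAB).trace := by rw [h1P1P]
        _ = ρAB.trace - (P * ρAB).trace := by rw [sub_mul, one_mul, trace_sub]
    rw [hsimp] at htr0
    exact (sub_eq_zero.mp htr0).symm
  have hτY : (τ * Y).trace = ρAB.trace := by
    have e1 : (τ * Y).trace = ((τ * M * ρAB) * M).trace := by
      rw [hY_def]
      congr 1
      simp only [Matrix.mul_assoc]
    rw [e1, trace_mul_comm]
    have e2 : M * (τ * M * ρAB) = (M * τ * M) * ρAB := by simp only [Matrix.mul_assoc]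
    rw [e2, hMτM, hPρtr]
  have hupper : (ρAB * Y).trace ≤ c * ρAB.trace := by
    have h1 : (0 : ℂ) ≤ ((c • τ - ρAB) * Y).trace := DmaxAux.trace_mul_nonneg hlam hY_psd
    rw [sub_mul, smul_mul_assoc, trace_sub, trace_smul, smul_eq_mul] at h1
    have h2 := sub_nonneg.mp h1
    rwa [hτY] at h2
  have hΓnn : (0 : ℂ) ≤ (ρAB * Y).trace := DmaxAux.trace_mul_nonneg hρAB hY_psd
  have hΓpos : 0 < ((ρAB * Y).trace).re := by
    rcases ((Complex.le_def.mp hΓnn).1).lt_or_eq with hlt | heq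
    · simpa using hlt
    · exfalso
      have hΓ0 : (ρAB * Y).trace = 0 := by
        apply Complex.ext
        · simpa using heq.symm
        · simpa using ((Complex.le_def.mp hΓnn).2).symm
      set S := hρAB.sqrt with hS_def
      have hSherm : S.IsHermitian := hρAB.posSemidef_sqrt.1
      have hSS : S * S = ρAB := hρAB.sqrt_mul_self
      set T := hM_psd.sqrt with hT_def
      have hTherm : T.IsHermitian := hM_psd.posSemidef_sqrt.1
      have hTT : T * T = M := hM_psd.sqrt_mul_self
      have hBherm : (S * M * S)ᴴ = S * M * S := by
        rw [conjTranspose_mul, conjTranspose_mul, hSherm.eq, hM_herm.eq]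
        simp only [Matrix.mul_assoc]
      have hBtr : ((S * M * S)ᴴ * (S * M * S)).trace = 0 := by
        rw [hBherm]
        have e1 : (S * M * S) * (S * M * S) = S * (M * (ρAB * (M * S))) := by
          rw [← hSS]
          simp only [Matrix.mul_assoc]
        rw [e1, trace_mul_comm]
        have e2 : (M * (ρAB * (M * S))) * S = Y * ρAB := by
          rw [hY_def, ← hSS]
          simp only [Matrix.mul_assoc]
        rw [e2, trace_mul_comm, hΓ0]
      have hB0 : S * M * S = 0 := DmaxAux.eq_zero_of_trace_conjTranspose_mul_self hBtr
      have hCtr : ((T * S)ᴴ * (T * S)).trace = 0 := by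
        have e3 : (T * S)ᴴ * (T * S) = S * (M * S) := by
          rw [conjTranspose_mul, hSherm.eq, hTherm.eq, ← hTT]
          simp only [Matrix.mul_assoc]
        rw [e3, ← Matrix.mul_assoc, hB0, trace_zero]
      have hC0 : T * S = 0 := DmaxAux.eq_zero_of_trace_conjTranspose_mul_self hCtr
      have hMS : M * S = 0 := by rw [← hTT, Matrix.mul_assoc, hC0, Matrix.mul_zero]
      have hMρ : M * ρAB = 0 := by rw [← hSS, ← Matrix.mul_assoc, hMS, Matrix.zero_mul]
      have hPρ0 : P * ρAB = 0 := by
        rw [← hMτM, Matrix.mul_assoc (M * τ) M ρAB, hMρ, Matrix.mul_zero]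
      rw [hPρ0, trace_zero] at hPρtr
      rw [← hPρtr] at htr
      simp at htr
  have hre : ((ρAB * Y).trace).re ≤ (2 : ℝ) ^ lam * ρAB.trace.re := by
    have h1 := (Complex.le_def.mp hupper).1
    rwa [hc_def, Complex.re_ofReal_mul] at h1
  rw [hMg, htrΓ]
  have h2pos : (0 : ℝ) < (2 : ℝ) ^ lam := Real.rpow_pos_of_pos (by norm_num) lam
  have hrhs_pos : 0 < (2 : ℝ) ^ lam * ρAB.trace.re := mul_pos h2pos htr
  rw [sub_le_iff_le_add]
  calc Real.logb 2 ((ρAB * Y).trace.re)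
      ≤ Real.logb 2 ((2 : ℝ) ^ lam * ρAB.trace.re) :=
        (Real.logb_le_logb (by norm_num) hΓpos hrhs_pos).mpr hre
    _ = lam + Real.logb 2 (ρAB.trace.re) := by
        rw [Real.logb_mul (ne_of_gt h2pos) (ne_of_gt htr),
          Real.logb_rpow (by norm_num) (by norm_num)]

end
end
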